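/- arXiv:2403.01293 — 3 statements merged into one kernel-verified Lean document; each statement's English description precedes it below -/
import Mathlib

section
/- Let n ≥ 4. Every automorphism f of Γ(n) can be written as f = T_{a,b} ∘ ψ_u ∘ α^i ∘ σ^j for some a, b ∈ ℤ_n, some unit u of ℤ_n, some i ∈ {0,1,2} and some j ∈ {0,1}, and this representation is unique. -/
/-- The connection set `S = {(i,0), (0,i), (i,i) : 1 ≤ i ≤ n-1}` of `ℤ_n × ℤ_n`. -/
def cayS (n : ℕ) : Set (ZMod n × ZMod n) :=
  {p | p ≠ 0 ∧ (p.2 = 0 ∨ p.1 = 0 ∨ p.1 = p.2)}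

/-- The Cayley graph `Γ(n) = Cay(ℤ_n × ℤ_n; S)`. -/
def Gamma (n : ℕ) : SimpleGraph (ZMod n × ZMod n) where
  Adj x y := x ≠ y ∧ x - y ∈ cayS n
  symm := ⟨by
    rintro x y ⟨hxy, hne, h⟩
    refine ⟨Ne.symm hxy, sub_ne_zero_of_ne (Ne.symm hxy), ?_⟩
    simp only [Prod.fst_sub, Prod.snd_sub] at h ⊢
    rcases h with h | h | h
    · exact Or.inl (by linear_combination -h)
    · exact Or.inr (Or.inl (by linear_combination -h))
    · exact Or.inr (Or.inr (by linear_combination -h))⟩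
  loopless := ⟨fun x h => h.1 rfl⟩

/-- `ψ_u : (i,j) ↦ (u·i, u·j)` for a unit `u` of `ℤ_n`. -/
def psiMap (n : ℕ) (u : (ZMod n)ˣ) : ZMod n × ZMod n → ZMod n × ZMod n :=
  fun p => (u * p.1, u * p.2)

/-- `σ : (i,j) ↦ (j,i)`. -/
def sigmaMap (n : ℕ) : ZMod n × ZMod n → ZMod n × ZMod n := fun p => (p.2, p.1)

/-- `α : (i,j) ↦ (-j, i-j)`. -/
def alphaMap (n : ℕ) : ZMod n × ZMod n → ZMod n × ZMod n := fun p => (-p.2, p.1 - p.2)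

/-- The translation `T_{a,b} : (x,y) ↦ (x+a, y+b)`. -/
def tMap (n : ℕ) (a b : ZMod n) : ZMod n × ZMod n → ZMod n × ZMod n :=
  fun p => (p.1 + a, p.2 + b)

namespace GammaAut

abbrev V (n : ℕ) := ZMod n × ZMod n

variable {n : ℕ}

/-- the coordinate functional constant on lines of class `k`. -/
def c (k : Fin 3) (p : V n) : ZMod n :=
  if k = 0 then p.2 else if k = 1 then p.1 else p.1 - p.2

@[simp] lemma c0 (p : V n) : c 0 p = p.2 := rfl
@[simp] lemma c1 (p : V n) : c 1 p = p.1 := rfl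
@[simp] lemma c2 (p : V n) : c 2 p = p.1 - p.2 := rfl

lemma c_zero (k : Fin 3) : c k (0 : V n) = 0 := by
  fin_cases k <;> simp [c]

lemma c_sub (k : Fin 3) (p q : V n) : c k (p - q) = c k p - c k q := by
  fin_cases k <;> simp [c] <;> ring

lemma c_add (k : Fin 3) (p q : V n) : c k (p + q) = c k p + c k q := by
  fin_cases k <;> simp [c] <;> ring

lemma eq_of_two {k k' : Fin 3} (hk : k ≠ k') {p q : V n}
    (h1 : c k p = c k q) (h2 : c k' p = c k' q) : p = q := by
  fin_cases k <;> fin_cases k' <;> simp [c, Fin.ext_iff] at h1 h2 <;>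
    first
    | exact absurd rfl hk
    | (refine Prod.ext ?_ ?_ <;>
        first
        | linear_combination h1
        | linear_combination h2
        | linear_combination h1 + h2
        | linear_combination h1 - h2
        | linear_combination h2 - h1)

lemma class_unique {p : V n} (hp : p ≠ 0) {k k' : Fin 3}
    (h1 : c k p = 0) (h2 : c k' p = 0) : k = k' := by
  by_contra hkk
  exact hp (eq_of_two hkk (by rw [h1, c_zero]) (by rw [h2, c_zero]))

lemma shared_unique {p q : V n} (hpq : p ≠ q) {k k' : Fin 3}
    (h1 : c k p = c k q) (h2 : c k' p = c k' q) : k = k' := by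
  by_contra hkk
  exact hpq (eq_of_two hkk h1 h2)

lemma adj_iff {x y : V n} : (Gamma n).Adj x y ↔ x ≠ y ∧ ∃ k, c k x = c k y := by
  constructor
  · rintro ⟨hne, -, h⟩
    refine ⟨hne, ?_⟩
    rcases h with h | h | h
    · exact ⟨0, by simpa [sub_eq_zero] using sub_eq_zero.mp (by simpa using h)⟩
    · exact ⟨1, by simpa [sub_eq_zero] using sub_eq_zero.mp (by simpa using h)⟩
    · refine ⟨2, ?_⟩
      simp only [Prod.fst_sub, Prod.snd_sub] at h
      simp only [c2]
      linear_combination h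
  · rintro ⟨hne, k, hk⟩
    refine ⟨hne, sub_ne_zero_of_ne hne, ?_⟩
    fin_cases k <;> simp [c, Fin.ext_iff] at hk
    · exact Or.inl (by simpa using sub_eq_zero.mpr hk)
    · exact Or.inr (Or.inl (by simpa using sub_eq_zero.mpr hk))
    · exact Or.inr (Or.inr (by simp only [Prod.fst_sub, Prod.snd_sub]; linear_combination hk))

lemma adj_ne {x y : V n} (h : (Gamma n).Adj x y) : x ≠ y := h.1

lemma adj_of {x y : V n} (hne : x ≠ y) (k : Fin 3) (hk : c k x = c k y) :
    (Gamma n).Adj x y := adj_iff.mpr ⟨hne, k, hk⟩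


/-- the complementary coordinate used to parametrize a line of class `k`. -/
def par (k : Fin 3) : Fin 3 := if k = 1 then 0 else 1

lemma par_ne (k : Fin 3) : par k ≠ k := by fin_cases k <;> simp [par, Fin.ext_iff]

/-- the point on the line `{p | c k p = v}` with parameter `t`. -/
def pt (k : Fin 3) (v t : ZMod n) : V n :=
  if k = 0 then (t, v) else if k = 1 then (v, t) else (t, t - v)

lemma pt_c (k : Fin 3) (v t : ZMod n) : c k (pt k v t) = v := by
  fin_cases k <;> simp [pt, c, Fin.ext_iff] <;> ring

lemma pt_par (k : Fin 3) (v t : ZMod n) : c (par k) (pt k v t) = t := by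
  fin_cases k <;> simp [pt, par, c, Fin.ext_iff]

lemma fresh1 (h3 : 3 ≤ n) (a b : ZMod n) : ∃ t : ZMod n, t ≠ a ∧ t ≠ b := by
  haveI : NeZero n := ⟨by omega⟩
  have hcard : (Finset.univ \ {a, b} : Finset (ZMod n)).Nonempty := by
    rw [← Finset.card_pos, Finset.card_sdiff_of_subset (Finset.subset_univ _)]
    have h2 : ({a, b} : Finset (ZMod n)).card ≤ 2 :=
      (Finset.card_insert_le _ _).trans (by simp)
    have : Fintype.card (ZMod n) = n := ZMod.card n
    simp only [Finset.card_univ, this]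
    omega
  obtain ⟨t, ht⟩ := hcard
  simp only [Finset.mem_sdiff, Finset.mem_insert, Finset.mem_singleton, not_or] at ht
  exact ⟨t, ht.2.1, ht.2.2⟩

lemma fresh2 (h4 : 4 ≤ n) (a b : ZMod n) :
    ∃ t s : ZMod n, t ≠ s ∧ t ≠ a ∧ t ≠ b ∧ s ≠ a ∧ s ≠ b := by
  haveI : NeZero n := ⟨by omega⟩
  have hcard : 1 < (Finset.univ \ {a, b} : Finset (ZMod n)).card := by
    rw [Finset.card_sdiff_of_subset (Finset.subset_univ _)]
    have h2 : ({a, b} : Finset (ZMod n)).card ≤ 2 :=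
      (Finset.card_insert_le _ _).trans (by simp)
    have : Fintype.card (ZMod n) = n := ZMod.card n
    simp only [Finset.card_univ, this]
    omega
  obtain ⟨t, ht, s, hs, hts⟩ := Finset.one_lt_card.mp hcard
  simp only [Finset.mem_sdiff, Finset.mem_insert, Finset.mem_singleton, not_or] at ht hs
  exact ⟨t, s, hts, ht.2.1, ht.2.2, hs.2.1, hs.2.2⟩

lemma fresh1of3 (h4 : 4 ≤ n) (a b d : ZMod n) : ∃ t : ZMod n, t ≠ a ∧ t ≠ b ∧ t ≠ d := by
  haveI : NeZero n := ⟨by omega⟩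
  have hcard : (Finset.univ \ {a, b, d} : Finset (ZMod n)).Nonempty := by
    rw [← Finset.card_pos, Finset.card_sdiff_of_subset (Finset.subset_univ _)]
    have h2 : ({a, b, d} : Finset (ZMod n)).card ≤ 3 :=
      (Finset.card_insert_le _ _).trans (by
        have := (Finset.card_insert_le b ({d} : Finset (ZMod n)))
        simp only [Finset.card_singleton] at this ⊢
        omega)
    have : Fintype.card (ZMod n) = n := ZMod.card n
    simp only [Finset.card_univ, this]
    omega
  obtain ⟨t, ht⟩ := hcard
  simp only [Finset.mem_sdiff, Finset.mem_insert, Finset.mem_singleton, not_or] at ht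
  exact ⟨t, ht.2.1, ht.2.2.1, ht.2.2.2⟩

lemma fresh2of3 (h5 : 5 ≤ n) (a b d : ZMod n) :
    ∃ t s : ZMod n, t ≠ s ∧ t ≠ a ∧ t ≠ b ∧ t ≠ d ∧ s ≠ a ∧ s ≠ b ∧ s ≠ d := by
  haveI : NeZero n := ⟨by omega⟩
  have hcard : 1 < (Finset.univ \ {a, b, d} : Finset (ZMod n)).card := by
    rw [Finset.card_sdiff_of_subset (Finset.subset_univ _)]
    have h2 : ({a, b, d} : Finset (ZMod n)).card ≤ 3 :=
      (Finset.card_insert_le _ _).trans (by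
        have := (Finset.card_insert_le b ({d} : Finset (ZMod n)))
        simp only [Finset.card_singleton] at this ⊢
        omega)
    have : Fintype.card (ZMod n) = n := ZMod.card n
    simp only [Finset.card_univ, this]
    omega
  obtain ⟨t, ht, s, hs, hts⟩ := Finset.one_lt_card.mp hcard
  simp only [Finset.mem_sdiff, Finset.mem_insert, Finset.mem_singleton, not_or] at ht hs
  exact ⟨t, s, hts, ht.2.1, ht.2.2.1, ht.2.2.2, hs.2.1, hs.2.2.1, hs.2.2.2⟩

/-- algebraic collinearity -/
def algCol (x y z : V n) : Prop := ∃ k, c k x = c k y ∧ c k x = c k z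

/-- every injective `algCol`-preserving map sends lines into lines. -/
lemma lineMap (h3 : 3 ≤ n) {h : V n → V n} (hinj : Function.Injective h)
    (pres : ∀ x y z : V n, x ≠ y → x ≠ z → y ≠ z →
      algCol x y z → algCol (h x) (h y) (h z))
    {p q : V n} (k : Fin 3) (hpq : p ≠ q) (hk : c k p = c k q) :
    ∃ k', ∀ r, c k r = c k p → c k' (h r) = c k' (h p) := by
  obtain ⟨t, ht1, ht2⟩ := fresh1 h3 (c (par k) p) (c (par k) q)
  set r0 : V n := pt k (c k p) t with hr0
  have hr0c : c k r0 = c k p := pt_c k _ t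
  have hr0par : c (par k) r0 = t := pt_par k _ t
  have hr0p : r0 ≠ p := fun e => ht1 (by rw [← hr0par, e])
  have hr0q : r0 ≠ q := fun e => ht2 (by rw [← hr0par, e])
  obtain ⟨k', hk'1, hk'2⟩ :=
    pres p q r0 hpq (Ne.symm hr0p) (Ne.symm hr0q) ⟨k, hk, hr0c.symm⟩
  refine ⟨k', fun r hr => ?_⟩
  by_cases hrp : r = p
  · rw [hrp]
  by_cases hrq : r = q
  · rw [hrq, ← hk'1]
  obtain ⟨k2, e1, e2⟩ :=
    pres p q r hpq (Ne.symm hrp) (Ne.symm hrq) ⟨k, hk, hr.symm⟩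
  have : k2 = k' := shared_unique (fun e => hpq (hinj e)) e1 hk'1
  rw [← this, e2]

lemma fin3cases (m : Fin 3) : m = 0 ∨ m = 1 ∨ m = 2 := by omega

lemma third3 {a b x y : Fin 3} (hab : a ≠ b) (hxa : x ≠ a) (hxb : x ≠ b)
    (hya : y ≠ a) (hyb : y ≠ b) : x = y := by omega

/-- The key rigidity lemma: a non-collinear triangle `0, u, v` has at most one
common neighbor, namely `u + v`, and then everything is 2-torsion. -/
lemma lemD {u v s : V n} {i j : Fin 3}
    (hu : u ≠ 0) (hv : v ≠ 0) (hs : s ≠ 0) (hsu : s ≠ u) (hsv : s ≠ v)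
    (hij : i ≠ j) (hciu : c i u = 0) (hcjv : c j v = 0)
    (huvS : ∃ m, c m (u - v) = 0) (hsS : ∃ k, c k s = 0)
    (hsuS : ∃ k, c k (s - u) = 0) (hsvS : ∃ k, c k (s - v) = 0) :
    s = u + v ∧ u + u = 0 ∧ v + v = 0 ∧
      ∃ m, m ≠ i ∧ m ≠ j ∧ c m (u + v) = 0 := by
  obtain ⟨m, hm⟩ := huvS
  rw [c_sub] at hm
  have hmi : m ≠ i := by
    intro e; subst e
    have hv' : c m v = 0 := by linear_combination hciu - hm
    exact hv (eq_of_two hij (by rw [hv', c_zero]) (by rw [hcjv, c_zero]))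
  have hmj : m ≠ j := by
    intro e; subst e
    have hu' : c m u = 0 := by linear_combination hcjv + hm
    exact hu (eq_of_two hij (by rw [hciu, c_zero]) (by rw [hu', c_zero]))
  obtain ⟨k, hks⟩ := hsS
  -- k ≠ i
  have hki : k ≠ i := by
    intro e; subst e
    obtain ⟨k2, hk2⟩ := hsvS
    rw [c_sub] at hk2
    have hk2i : k2 ≠ k := by
      intro e; subst e
      have : c k2 v = 0 := by linear_combination hks - hk2
      exact hv (eq_of_two hij (by rw [this, c_zero]) (by rw [hcjv, c_zero]))
    have hk2j : k2 ≠ j := by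
      intro e; subst e
      have : c k2 s = 0 := by linear_combination hcjv + hk2
      exact hs (eq_of_two (show k ≠ k2 from fun e => hk2i e.symm)
        (by rw [hks, c_zero]) (by rw [this, c_zero]))
    have hk2m : k2 = m := third3 hij hk2i hk2j hmi hmj
    subst hk2m
    have hmsu : c k2 (s - u) = 0 := by rw [c_sub]; linear_combination hk2 - hm
    have hisu : c k (s - u) = 0 := by rw [c_sub]; linear_combination hks - hciu
    have hsune : s - u ≠ 0 := sub_ne_zero_of_ne hsu
    exact hmi (class_unique hsune hmsu hisu)
  have hkj : k ≠ j := by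
    intro e; subst e
    obtain ⟨k2, hk2⟩ := hsuS
    rw [c_sub] at hk2
    have hk2k : k2 ≠ k := by
      intro e; subst e
      have : c k2 u = 0 := by linear_combination hks - hk2
      exact hu (eq_of_two hij (by rw [hciu, c_zero]) (by rw [this, c_zero]))
    have hk2i : k2 ≠ i := by
      intro e; subst e
      have : c k2 s = 0 := by linear_combination hciu + hk2
      exact hs (eq_of_two (show k2 ≠ k from hk2k)
        (by rw [this, c_zero]) (by rw [hks, c_zero]))
    have hk2m : k2 = m := third3 hij hk2i hk2k hmi hmj
    subst hk2m
    have hmsv : c k2 (s - v) = 0 := by rw [c_sub]; linear_combination hk2 + hm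
    have hjsv : c k (s - v) = 0 := by rw [c_sub]; linear_combination hks - hcjv
    have hsvne : s - v ≠ 0 := sub_ne_zero_of_ne hsv
    exact hmj (class_unique hsvne hmsv hjsv)
  have hkm : k = m := third3 hij hki hkj hmi hmj
  subst hkm
  -- class of s - u is j
  obtain ⟨k3, hk3⟩ := hsuS
  rw [c_sub] at hk3
  have hk3k : k3 ≠ k := by
    intro e; subst e
    have : c k3 u = 0 := by linear_combination hks - hk3
    exact hu (eq_of_two (show i ≠ k3 from fun e => hmi e.symm)
      (by rw [hciu, c_zero]) (by rw [this, c_zero]))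
  have hk3i : k3 ≠ i := by
    intro e; subst e
    have : c k3 s = 0 := by linear_combination hciu + hk3
    exact hs (eq_of_two (show k3 ≠ k from hk3k)
      (by rw [this, c_zero]) (by rw [hks, c_zero]))
  have hk3j : k3 = j := third3 (show i ≠ k from fun e => hki e.symm) hk3i hk3k
    (show j ≠ i from fun e => hij e.symm) (show j ≠ k from fun e => hkj e.symm)
  rw [hk3j] at hk3
  -- class of s - v is i
  obtain ⟨k4, hk4⟩ := hsvS
  rw [c_sub] at hk4
  have hk4k : k4 ≠ k := by
    intro e; subst e
    have : c k4 v = 0 := by linear_combination hks - hk4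
    exact hv (eq_of_two (show j ≠ k4 from fun e => hmj e.symm)
      (by rw [hcjv, c_zero]) (by rw [this, c_zero]))
  have hk4j : k4 ≠ j := by
    intro e; subst e
    have : c k4 s = 0 := by linear_combination hcjv + hk4
    exact hs (eq_of_two (show k4 ≠ k from hk4k)
      (by rw [this, c_zero]) (by rw [hks, c_zero]))
  have hk4i : k4 = i := third3 (show j ≠ k from fun e => hkj e.symm) hk4j hk4k
    (show i ≠ j from hij) (show i ≠ k from fun e => hki e.symm)
  rw [hk4i] at hk4
  -- s = u + v
  have hsuv : s = u + v := by
    refine eq_of_two hij ?_ ?_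
    · rw [c_add]; linear_combination hk4 - hciu
    · rw [c_add]; linear_combination hk3 - hcjv
  have h2cm : c k u + c k u = 0 := by
    have : c k (u + v) = 0 := by rw [← hsuv]; exact hks
    rw [c_add] at this
    linear_combination this + hm
  have huu : u + u = 0 := by
    refine eq_of_two (show i ≠ k from fun e => hki e.symm) ?_ ?_
    · rw [c_add, c_zero]; linear_combination 2 * hciu
    · rw [c_add, c_zero]; linear_combination h2cm
  have hvv : v + v = 0 := by
    have h2cmv : c k v + c k v = 0 := by linear_combination h2cm - 2 * hm
    refine eq_of_two (show j ≠ k from fun e => hkj e.symm) ?_ ?_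
    · rw [c_add, c_zero]; linear_combination 2 * hcjv
    · rw [c_add, c_zero]; linear_combination h2cmv
  refine ⟨hsuv, huu, hvv, k, hki, hkj, ?_⟩
  · rw [← hsuv]; exact hks

lemma adj_diff {x y : V n} (h : (Gamma n).Adj x y) : ∃ k, c k (y - x) = 0 := by
  obtain ⟨-, k, hk⟩ := adj_iff.mp h
  exact ⟨k, by rw [c_sub]; linear_combination -hk⟩

lemma diff_flip {k : Fin 3} {p q : V n} (h : c k (p - q) = 0) : c k (q - p) = 0 := by
  rw [c_sub] at h ⊢; linear_combination -h

/-- a 4-clique, given by its six adjacencies. -/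
def clique4 (x y z w : V n) : Prop :=
  (Gamma n).Adj x y ∧ (Gamma n).Adj x z ∧ (Gamma n).Adj x w ∧
  (Gamma n).Adj y z ∧ (Gamma n).Adj y w ∧ (Gamma n).Adj z w

/-- classification of 4-cliques: either collinear or everything is 2-torsion. -/
lemma lemC {x y z w : V n} (h : clique4 x y z w) :
    (∃ k, c k x = c k y ∧ c k x = c k z ∧ c k x = c k w) ∨
    ((y-x)+(y-x) = 0 ∧ (z-x)+(z-x) = 0 ∧ (w-x)+(w-x) = 0) := by
  obtain ⟨hxy, hxz, hxw, hyz, hyw, hzw⟩ := h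
  obtain ⟨ku, hku⟩ := adj_diff hxy
  obtain ⟨kv, hkv⟩ := adj_diff hxz
  obtain ⟨ks, hks⟩ := adj_diff hxw
  have hyx : y - x ≠ 0 := sub_ne_zero_of_ne (Ne.symm (adj_ne hxy))
  have hzx : z - x ≠ 0 := sub_ne_zero_of_ne (Ne.symm (adj_ne hxz))
  have hwx : w - x ≠ 0 := sub_ne_zero_of_ne (Ne.symm (adj_ne hxw))
  by_cases e1 : ku = kv
  · by_cases e2 : ku = ks
    · left
      refine ⟨ku, ?_, ?_, ?_⟩
      · rw [c_sub] at hku; linear_combination -hku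
      · rw [← e1] at hkv; rw [c_sub] at hkv; linear_combination -hkv
      · rw [← e2] at hks; rw [c_sub] at hks; linear_combination -hks
    · -- classes of y-x and w-x differ; use lemD on (y-x, w-x) with third point z-x
      right
      have h1 : ∃ m, c m ((y-x) - (w-x)) = 0 := by
        obtain ⟨m, hm⟩ := adj_diff hyw
        exact ⟨m, by rw [show (y-x) - (w-x) = y - w by ring]; exact diff_flip hm⟩
      have h2 : ∃ m, c m ((z-x) - (y-x)) = 0 := by
        obtain ⟨m, hm⟩ := adj_diff hyz
        exact ⟨m, by rw [show (z-x) - (y-x) = z - y by ring]; exact hm⟩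
      have h3 : ∃ m, c m ((z-x) - (w-x)) = 0 := by
        obtain ⟨m, hm⟩ := adj_diff hzw
        exact ⟨m, by rw [show (z-x) - (w-x) = z - w by ring]; exact diff_flip hm⟩
      obtain ⟨hsuv, huu, hvv, -⟩ :=
        lemD hyx hwx hzx
          (show z - x ≠ y - x from fun e =>
            (adj_ne hyz) (show y = z by linear_combination -e))
          (show z - x ≠ w - x from fun e =>
            (adj_ne hzw) (show z = w by linear_combination e))
          e2 hku hks h1 ⟨kv, hkv⟩ h2 h3
      exact ⟨huu, by linear_combination 2 * hsuv + huu + hvv, hvv⟩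
  · -- classes of y-x and z-x differ; lemD on (y-x, z-x) with third point w-x
    right
    have h1 : ∃ m, c m ((y-x) - (z-x)) = 0 := by
      obtain ⟨m, hm⟩ := adj_diff hyz
      exact ⟨m, by rw [show (y-x) - (z-x) = y - z by ring]; exact diff_flip hm⟩
    have h2 : ∃ m, c m ((w-x) - (y-x)) = 0 := by
      obtain ⟨m, hm⟩ := adj_diff hyw
      exact ⟨m, by rw [show (w-x) - (y-x) = w - y by ring]; exact hm⟩
    have h3 : ∃ m, c m ((w-x) - (z-x)) = 0 := by
      obtain ⟨m, hm⟩ := adj_diff hzw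
      exact ⟨m, by rw [show (w-x) - (z-x) = w - z by ring]; exact hm⟩
    obtain ⟨hsuv, huu, hvv, -⟩ :=
      lemD hyx hzx hwx
        (show w - x ≠ y - x from fun e =>
          (adj_ne hyw) (show y = w by linear_combination -e))
        (show w - x ≠ z - x from fun e =>
          (adj_ne hzw) (show z = w by linear_combination -e))
        e1 hku hkv h1 ⟨ks, hks⟩ h2 h3
    exact ⟨huu, hvv, by linear_combination 2 * hsuv + huu + hvv⟩
/-- a pure edge: one contained in essentially a unique 4-clique. -/
def Pure (a b : V n) : Prop :=
  (Gamma n).Adj a b ∧ ∀ C D C' D' : V n, clique4 a b C D → clique4 a b C' D' →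
    (C = C' ∧ D = D') ∨ (C = D' ∧ D = C')

/-- edges of a Klein-coset 4-clique are never pure. -/
lemma NP (hn : 4 ≤ n) {a d d' : V n} {kd kd' ks : Fin 3}
    (hd : d ≠ 0) (hd' : d' ≠ 0) (hdd' : d + d' ≠ 0)
    (hkd : c kd d = 0) (hkd' : c kd' d' = 0) (hks : c ks (d + d') = 0)
    (h2d' : d' + d' = 0) (hne : kd ≠ kd') : ¬ Pure a (a + d) := by
  rintro ⟨hadj, hP⟩
  have hdne : d ≠ d' := fun e => hne (class_unique hd hkd (e ▸ hkd'))
  have hkdd' : c kd d' ≠ 0 := fun e => hne (class_unique hd' e hkd')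
  have hks' : c ks d + c ks d' = 0 := by rw [← c_add]; exact hks
  have h2d'ks : c ks d' + c ks d' = 0 := by
    have := congrArg (c ks) h2d'; rwa [c_add, c_zero] at this
  -- the Klein completion
  have clique1 : clique4 a (a + d) (a + d') (a + (d + d')) := by
    refine ⟨hadj, ?_, ?_, ?_, ?_, ?_⟩
    · exact adj_of (fun e => hd' (by linear_combination -e)) kd'
        (by rw [c_add, hkd', add_zero])
    · exact adj_of (fun e => hdd' (by linear_combination -e)) ks
        (by rw [c_add, hks, add_zero])
    · refine adj_of (fun e => hdne (by linear_combination e)) ks ?_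
      rw [c_add, c_add]
      linear_combination hks' - h2d'ks
    · exact adj_of (fun e => hd' (by linear_combination -e)) kd'
        (by rw [c_add, c_add, c_add, hkd']; ring)
    · exact adj_of (fun e => hd (by linear_combination -e)) kd
        (by rw [c_add, c_add, c_add, hkd]; ring)
  -- the line completion
  obtain ⟨t1, t2, ht12, h1a, h1b, h2a, h2b⟩ :=
    fresh2 hn (c (par kd) a) (c (par kd) (a + d))
  set C' : V n := pt kd (c kd a) t1 with hC'
  set D' : V n := pt kd (c kd a) t2 with hD'
  have hcC' : c kd C' = c kd a := pt_c kd _ t1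
  have hcD' : c kd D' = c kd a := pt_c kd _ t2
  have hpC' : c (par kd) C' = t1 := pt_par kd _ t1
  have hpD' : c (par kd) D' = t2 := pt_par kd _ t2
  have hcb : c kd (a + d) = c kd a := by rw [c_add, hkd, add_zero]
  have clique2 : clique4 a (a + d) C' D' := by
    refine ⟨hadj, ?_, ?_, ?_, ?_, ?_⟩
    · exact adj_of (fun e => h1a (by rw [← hpC', ← e])) kd hcC'.symm
    · exact adj_of (fun e => h2a (by rw [← hpD', ← e])) kd hcD'.symm
    · exact adj_of (fun e => h1b (by rw [← hpC', ← e])) kd (by rw [hcb, hcC'])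
    · exact adj_of (fun e => h2b (by rw [← hpD', ← e])) kd (by rw [hcb, hcD'])
    · exact adj_of (fun e => ht12 (by rw [← hpC', ← hpD', e])) kd (by rw [hcC', hcD'])
  have hCne : ∀ P, c kd P = c kd a → a + d' ≠ P := by
    intro P hP e
    apply hkdd'
    have : c kd (a + d') = c kd a := by rw [e, hP]
    rw [c_add] at this
    linear_combination this
  rcases hP (a + d') (a + (d + d')) C' D' clique1 clique2 with ⟨e1, -⟩ | ⟨e1, -⟩
  · exact hCne C' hcC' e1
  · exact hCne D' hcD' e1

/-- in `Γ(4)`, an edge whose difference is not 2-torsion is pure. -/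
lemma pure_of (hn4 : n = 4) {p q : V n} (k : Fin 3)
    (hadj : (Gamma n).Adj p q) (hk : c k p = c k q)
    (h2 : (q - p) + (q - p) ≠ 0) : Pure p q := by
  subst hn4
  refine ⟨hadj, fun C D C' D' h1 h2' => ?_⟩
  have online : ∀ {C D : V 4}, clique4 p q C D → c k C = c k p ∧ c k D = c k p := by
    intro C D hcl
    rcases lemC hcl with ⟨k0, e1, e2, e3⟩ | ⟨t1, -, -⟩
    · have hk0 : k0 = k := shared_unique (adj_ne hadj) e1 hk
      subst hk0; exact ⟨e2.symm, e3.symm⟩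
    · exact absurd t1 h2
  obtain ⟨hC, hD⟩ := online h1
  obtain ⟨hC', hD'⟩ := online h2'
  have hq : c k q = c k p := hk.symm
  have inj : ∀ {P Q : V 4}, c k P = c k p → c k Q = c k p →
      c (par k) P = c (par k) Q → P = Q := by
    intro P Q hP hQ hPQ
    exact eq_of_two (Ne.symm (par_ne k)) (hP.trans hQ.symm) hPQ
  obtain ⟨h1pq, h1pC, h1pD, h1qC, h1qD, h1CD⟩ := h1
  obtain ⟨-, h2pC, h2pD, h2qC, h2qD, h2CD⟩ := h2'
  set κ := fun P : V 4 => c (par k) P with hκ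
  have hne : ∀ {P Q : V 4}, c k P = c k p → c k Q = c k p → P ≠ Q → κ P ≠ κ Q :=
    fun hP hQ hPQ e => hPQ (inj hP hQ e)
  have hA : ({κ p, κ q, κ C, κ D} : Finset (ZMod 4)) = Finset.univ := by
    apply Finset.eq_univ_of_card
    rw [Finset.card_insert_of_notMem (by
          simp only [Finset.mem_insert, Finset.mem_singleton, not_or]
          exact ⟨hne rfl hq (adj_ne h1pq), hne rfl hC (adj_ne h1pC),
            hne rfl hD (adj_ne h1pD)⟩),
        Finset.card_insert_of_notMem (by
          simp only [Finset.mem_insert, Finset.mem_singleton, not_or]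
          exact ⟨hne hq hC (adj_ne h1qC), hne hq hD (adj_ne h1qD)⟩),
        Finset.card_insert_of_notMem (by
          simp only [Finset.mem_singleton]
          exact hne hC hD (adj_ne h1CD)),
        Finset.card_singleton, ZMod.card]
  have hmem : ∀ {P : V 4}, c k P = c k p → P ≠ p → P ≠ q → P = C ∨ P = D := by
    intro P hP hPp hPq
    have : κ P ∈ ({κ p, κ q, κ C, κ D} : Finset (ZMod 4)) := hA ▸ Finset.mem_univ _
    simp only [Finset.mem_insert, Finset.mem_singleton] at this
    rcases this with e | e | e | e
    · exact absurd (inj hP rfl e) hPp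
    · exact absurd (inj hP hq e) hPq
    · exact Or.inl (inj hP hC e)
    · exact Or.inr (inj hP hD e)
  have hCc := hmem hC' (Ne.symm (adj_ne h2pC)) (Ne.symm (adj_ne h2qC))
  have hDc := hmem hD' (Ne.symm (adj_ne h2pD)) (Ne.symm (adj_ne h2qD))
  have hC'D' : C' ≠ D' := adj_ne h2CD
  rcases hCc with e1 | e1 <;> rcases hDc with e2 | e2
  · exact absurd (e1.trans e2.symm) hC'D'
  · exact Or.inl ⟨e1.symm, e2.symm⟩
  · exact Or.inr ⟨e2.symm, e1.symm⟩
  · exact absurd (e1.trans e2.symm) hC'D'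

def adjAll (w x y z : V n) : Prop :=
  (Gamma n).Adj w x ∧ (Gamma n).Adj w y ∧ (Gamma n).Adj w z

/-- graph-theoretic collinearity -/
def gcol (x y z : V n) : Prop :=
  (Gamma n).Adj x y ∧ (Gamma n).Adj x z ∧ (Gamma n).Adj y z ∧
    ((∃ w w', w ≠ w' ∧ adjAll w x y z ∧ adjAll w' x y z) ∨
     (∃ w, clique4 x y z w ∧ ∃ a b,
        (a = x ∨ a = y ∨ a = z ∨ a = w) ∧ (b = x ∨ b = y ∨ b = z ∨ b = w) ∧ Pure a b))

lemma gcol_iff (hn : 4 ≤ n) (x y z : V n) :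
    gcol x y z ↔ (x ≠ y ∧ x ≠ z ∧ y ≠ z ∧ algCol x y z) := by
  constructor
  · rintro ⟨hxy, hxz, hyz, hdisj⟩
    refine ⟨adj_ne hxy, adj_ne hxz, adj_ne hyz, ?_⟩
    by_contra hnc
    obtain ⟨i, hi⟩ := adj_diff hxy
    obtain ⟨j, hj⟩ := adj_diff hxz
    have hij : i ≠ j := by
      intro e; subst e
      refine hnc ⟨i, ?_, ?_⟩
      · rw [c_sub] at hi; linear_combination -hi
      · rw [c_sub] at hj; linear_combination -hj
    have hu0 : y - x ≠ 0 := sub_ne_zero_of_ne (Ne.symm (adj_ne hxy))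
    have hv0 : z - x ≠ 0 := sub_ne_zero_of_ne (Ne.symm (adj_ne hxz))
    have huvS : ∃ m, c m ((y-x) - (z-x)) = 0 := by
      obtain ⟨m, hm⟩ := adj_diff hyz
      exact ⟨m, by rw [show (y-x) - (z-x) = y - z by ring]; exact diff_flip hm⟩
    have hD' : ∀ w : V n, (Gamma n).Adj w x → (Gamma n).Adj w y → (Gamma n).Adj w z →
        w - x = (y-x) + (z-x) ∧ (y-x)+(y-x) = 0 ∧ (z-x)+(z-x) = 0 ∧
        ∃ m, m ≠ i ∧ m ≠ j ∧ c m ((y-x)+(z-x)) = 0 := by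
      intro w hwx hwy hwz
      have hs0 : w - x ≠ 0 := sub_ne_zero_of_ne (adj_ne hwx)
      have hsu : w - x ≠ y - x := fun e => (adj_ne hwy) (show w = y by linear_combination e)
      have hsv : w - x ≠ z - x := fun e => (adj_ne hwz) (show w = z by linear_combination e)
      have hsS : ∃ k, c k (w - x) = 0 := by
        obtain ⟨m, hm⟩ := adj_diff hwx.symm
        exact ⟨m, hm⟩
      have hsuS : ∃ k, c k ((w-x) - (y-x)) = 0 := by
        obtain ⟨m, hm⟩ := adj_diff hwy.symm
        exact ⟨m, by rw [show (w-x) - (y-x) = w - y by ring]; exact hm⟩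
      have hsvS : ∃ k, c k ((w-x) - (z-x)) = 0 := by
        obtain ⟨m, hm⟩ := adj_diff hwz.symm
        exact ⟨m, by rw [show (w-x) - (z-x) = w - z by ring]; exact hm⟩
      exact lemD hu0 hv0 hs0 hsu hsv hij hi hj huvS hsS hsuS hsvS
    rcases hdisj with ⟨w, w', hne, ⟨ha1, ha2, ha3⟩, ⟨hb1, hb2, hb3⟩⟩ |
        ⟨w, ⟨hcxy, hcxz, hcxw, hcyz, hcyw, hczw⟩, aa, bb, ha, hb, hpure⟩
    · obtain ⟨e1, -⟩ := hD' w ha1 ha2 ha3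
      obtain ⟨e2, -⟩ := hD' w' hb1 hb2 hb3
      exact hne (by linear_combination e1 - e2)
    · obtain ⟨hsuv, huu, hvv, m, hmi, hmj, hm⟩ := hD' w hcxw.symm hcyw.symm hczw.symm
      have huv0 : (y-x) + (z-x) ≠ 0 := by
        rw [← hsuv]; exact sub_ne_zero_of_ne (Ne.symm (adj_ne hcxw))
      have hNP1 : ∀ a : V n, ¬ Pure a (a + (y-x)) :=
        fun a => NP hn hu0 hv0 huv0 hi hj hm hvv hij
      have hNP2 : ∀ a : V n, ¬ Pure a (a + (z-x)) := by
        intro a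
        refine NP hn (ks := m) hv0 hu0 ?_ hj hi ?_ huu (fun e => hij e.symm)
        · rw [add_comm]; exact huv0
        · rw [add_comm]; exact hm
      have hNP3 : ∀ a : V n, ¬ Pure a (a + ((y-x)+(z-x))) := by
        intro a
        refine NP hn (ks := j) huv0 hu0 ?_ hm hi ?_ huu hmi
        · rw [show (y-x)+(z-x)+(y-x) = (z-x) + ((y-x)+(y-x)) by ring, huu, add_zero]
          exact hv0
        · rw [show (y-x)+(z-x)+(y-x) = (z-x) + ((y-x)+(y-x)) by ring, huu, add_zero]
          exact hj
      have hw : w = x + ((y-x)+(z-x)) := by linear_combination hsuv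
      rcases ha with ha | ha | ha | ha <;> rcases hb with hb | hb | hb | hb <;>
        rw [ha, hb] at hpure
      · exact (adj_ne hpure.1) rfl
      · exact hNP1 x ((show y = x + (y-x) by ring) ▸ hpure)
      · exact hNP2 x ((show z = x + (z-x) by ring) ▸ hpure)
      · exact hNP3 x ((show w = x + ((y-x)+(z-x)) by linear_combination hsuv) ▸ hpure)
      · exact hNP1 y ((show x = y + (y-x) by linear_combination -huu) ▸ hpure)
      · exact (adj_ne hpure.1) rfl
      · exact hNP3 y ((show z = y + ((y-x)+(z-x)) by linear_combination -huu) ▸ hpure)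
      · exact hNP2 y ((show w = y + (z-x) by linear_combination hsuv) ▸ hpure)
      · exact hNP2 z ((show x = z + (z-x) by linear_combination -hvv) ▸ hpure)
      · exact hNP3 z ((show y = z + ((y-x)+(z-x)) by linear_combination -hvv) ▸ hpure)
      · exact (adj_ne hpure.1) rfl
      · exact hNP1 z ((show w = z + (y-x) by linear_combination hsuv) ▸ hpure)
      · exact hNP3 w ((show x = w + ((y-x)+(z-x)) by
          linear_combination -hsuv - huu - hvv) ▸ hpure)
      · exact hNP2 w ((show y = w + (z-x) by linear_combination -hsuv - hvv) ▸ hpure)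
      · exact hNP1 w ((show z = w + (y-x) by linear_combination -hsuv - huu) ▸ hpure)
      · exact (adj_ne hpure.1) rfl
  · rintro ⟨hxy, hxz, hyz, k, e1, e2⟩
    have e3 : c k y = c k z := by rw [← e1, e2]
    refine ⟨adj_of hxy k e1, adj_of hxz k e2, adj_of hyz k e3, ?_⟩
    have hκ : ∀ {P Q : V n}, c k P = c k x → c k Q = c k x → P ≠ Q →
        c (par k) P ≠ c (par k) Q := by
      intro P Q hP hQ hPQ e
      exact hPQ (eq_of_two (Ne.symm (par_ne k)) (hP.trans hQ.symm) e)
    by_cases h5 : 5 ≤ n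
    · left
      obtain ⟨t1, t2, ht12, h1x, h1y, h1z, h2x, h2y, h2z⟩ :=
        fresh2of3 h5 (c (par k) x) (c (par k) y) (c (par k) z)
      set w : V n := pt k (c k x) t1 with hwdef
      set w' : V n := pt k (c k x) t2 with hw'def
      have hcw : c k w = c k x := pt_c k _ t1
      have hcw' : c k w' = c k x := pt_c k _ t2
      have hpw : c (par k) w = t1 := pt_par k _ t1
      have hpw' : c (par k) w' = t2 := pt_par k _ t2
      refine ⟨w, w', fun e => ht12 (by rw [← hpw, ← hpw', e]), ?_, ?_⟩
      · exact ⟨adj_of (fun e => h1x (by rw [← hpw, e])) k hcw,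
          adj_of (fun e => h1y (by rw [← hpw, e])) k (by rw [hcw, e1]),
          adj_of (fun e => h1z (by rw [← hpw, e])) k (by rw [hcw, e2])⟩
      · exact ⟨adj_of (fun e => h2x (by rw [← hpw', e])) k hcw',
          adj_of (fun e => h2y (by rw [← hpw', e])) k (by rw [hcw', e1]),
          adj_of (fun e => h2z (by rw [← hpw', e])) k (by rw [hcw', e2])⟩
    · right
      have hn4 : n = 4 := by omega
      subst hn4
      obtain ⟨t4, h4x, h4y, h4z⟩ :=
        fresh1of3 (le_refl 4) (c (par k) x) (c (par k) y) (c (par k) z)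
      set w : V 4 := pt k (c k x) t4 with hwdef
      have hcw : c k w = c k x := pt_c k _ t4
      have hpw : c (par k) w = t4 := pt_par k _ t4
      have hwx : (Gamma 4).Adj x w := adj_of (fun e => h4x (by rw [← hpw, ← e])) k hcw.symm
      have hwy : (Gamma 4).Adj y w :=
        adj_of (fun e => h4y (by rw [← hpw, ← e])) k (by rw [hcw, e1])
      have hwz : (Gamma 4).Adj z w :=
        adj_of (fun e => h4z (by rw [← hpw, ← e])) k (by rw [hcw, e2])
      have hclique : clique4 x y z w :=
        ⟨adj_of hxy k e1, adj_of hxz k e2, hwx, adj_of hyz k e3, hwy, hwz⟩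
      refine ⟨w, hclique, ?_⟩
      -- find among y z w a point whose par-coordinate is  (c (par k) x) + 1
      have hA : ({c (par k) x, c (par k) y, c (par k) z, t4} : Finset (ZMod 4)) =
          Finset.univ := by
        apply Finset.eq_univ_of_card
        rw [Finset.card_insert_of_notMem (by
              simp only [Finset.mem_insert, Finset.mem_singleton, not_or]
              exact ⟨hκ rfl e1.symm hxy, hκ rfl e2.symm hxz,
                fun e => h4x (by rw [e])⟩),
            Finset.card_insert_of_notMem (by
              simp only [Finset.mem_insert, Finset.mem_singleton, not_or]
              exact ⟨hκ e1.symm e2.symm hyz, fun e => h4y (by rw [e])⟩),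
            Finset.card_insert_of_notMem (by
              simp only [Finset.mem_singleton]
              exact fun e => h4z (by rw [e])),
            Finset.card_singleton, ZMod.card]
      have hmem : c (par k) x + 1 ∈
          ({c (par k) x, c (par k) y, c (par k) z, t4} : Finset (ZMod 4)) :=
        hA ▸ Finset.mem_univ _
      simp only [Finset.mem_insert, Finset.mem_singleton] at hmem
      have hpure : ∀ q : V 4, c k q = c k x → c (par k) q = c (par k) x + 1 →
          Pure x q := by
        intro q hq hpq
        have hxq : x ≠ q := fun e => by
          rw [← e] at hpq
          exact (by decide : (1 : ZMod 4) ≠ 0) (by linear_combination -hpq)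
        refine pure_of rfl k (adj_of hxq k hq.symm) hq.symm ?_
        intro e
        have := congrArg (c (par k)) e
        rw [c_add, c_sub, c_zero, hpq] at this
        exact (by decide : (2 : ZMod 4) ≠ 0) (by linear_combination this)
      rcases hmem with e | e | e | e
      · exact absurd e.symm (by
          intro h
          exact (by decide : (1 : ZMod 4) ≠ 0) (by linear_combination -h))
      · exact ⟨x, y, Or.inl rfl, Or.inr (Or.inl rfl),
          hpure y e1.symm e.symm⟩
      · exact ⟨x, z, Or.inl rfl, Or.inr (Or.inr (Or.inl rfl)),
          hpure z e2.symm e.symm⟩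
      · exact ⟨x, w, Or.inl rfl, Or.inr (Or.inr (Or.inr rfl)),
          hpure w hcw (by rw [hpw, e])⟩

section transfer

variable (f : Gamma n ≃g Gamma n)

lemma clique4_iso {x y z w : V n} :
    clique4 (f x) (f y) (f z) (f w) ↔ clique4 x y z w := by
  unfold clique4
  simp only [SimpleGraph.Iso.map_adj_iff]

lemma pure_iso {a b : V n} (h : Pure a b) : Pure (f a) (f b) := by
  obtain ⟨hadj, hP⟩ := h
  refine ⟨f.map_adj_iff.mpr hadj, ?_⟩
  intro C D C' D' h1 h2
  obtain ⟨C0, rfl⟩ := f.toEquiv.surjective C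
  obtain ⟨D0, rfl⟩ := f.toEquiv.surjective D
  obtain ⟨C0', rfl⟩ := f.toEquiv.surjective C'
  obtain ⟨D0', rfl⟩ := f.toEquiv.surjective D'
  rcases hP C0 D0 C0' D0' ((clique4_iso f).mp h1) ((clique4_iso f).mp h2) with
    ⟨e1, e2⟩ | ⟨e1, e2⟩
  · exact Or.inl ⟨congrArg f e1, congrArg f e2⟩
  · exact Or.inr ⟨congrArg f e1, congrArg f e2⟩

lemma gcol_iso {x y z : V n} (h : gcol x y z) : gcol (f x) (f y) (f z) := by
  obtain ⟨h1, h2, h3, hd⟩ := h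
  refine ⟨f.map_adj_iff.mpr h1, f.map_adj_iff.mpr h2, f.map_adj_iff.mpr h3, ?_⟩
  rcases hd with ⟨w, w', hne, ⟨a1, a2, a3⟩, ⟨b1, b2, b3⟩⟩ | ⟨w, hcl, a, b, ha, hb, hp⟩
  · exact Or.inl ⟨f w, f w', fun e => hne (f.toEquiv.injective e),
      ⟨f.map_adj_iff.mpr a1, f.map_adj_iff.mpr a2, f.map_adj_iff.mpr a3⟩,
      ⟨f.map_adj_iff.mpr b1, f.map_adj_iff.mpr b2, f.map_adj_iff.mpr b3⟩⟩
  · refine Or.inr ⟨f w, (clique4_iso f).mpr hcl, f a, f b, ?_, ?_, pure_iso f hp⟩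
    · rcases ha with e | e | e | e
      · exact Or.inl (congrArg f e)
      · exact Or.inr (Or.inl (congrArg f e))
      · exact Or.inr (Or.inr (Or.inl (congrArg f e)))
      · exact Or.inr (Or.inr (Or.inr (congrArg f e)))
    · rcases hb with e | e | e | e
      · exact Or.inl (congrArg f e)
      · exact Or.inr (Or.inl (congrArg f e))
      · exact Or.inr (Or.inr (Or.inl (congrArg f e)))
      · exact Or.inr (Or.inr (Or.inr (congrArg f e)))

lemma gcol_iso_iff {x y z : V n} : gcol (f x) (f y) (f z) ↔ gcol x y z := by
  constructor
  · intro h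
    have := gcol_iso f.symm h
    simpa using this
  · exact gcol_iso f

end transfer

/-- the coordinate lemma: a bijection fixing `0` and each of the three line
classes through every point is multiplication by a unit. -/
lemma COORD (hn : 4 ≤ n) (h : V n → V n) (hbij : Function.Bijective h) (h0 : h 0 = 0)
    (pres : ∀ x y z : V n, x ≠ y → x ≠ z → y ≠ z → algCol x y z → algCol (h x) (h y) (h z))
    (Hl : ∀ (k : Fin 3) (p : V n), c k p = 0 ↔ c k (h p) = 0) :
    ∃ u : (ZMod n)ˣ, h = psiMap n u := by
  haveI : NeZero n := ⟨by omega⟩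
  have h3 : 3 ≤ n := by omega
  have hsnd0 : ∀ i : ZMod n, (h (i, 0)).2 = 0 := fun i => (Hl 0 (i, 0)).mp rfl
  have hfst0 : ∀ j : ZMod n, (h (0, j)).1 = 0 := fun j => (Hl 1 (0, j)).mp rfl
  set φ : ZMod n → ZMod n := fun i => (h (i, 0)).1 with hφdef
  set ψ : ZMod n → ZMod n := fun j => (h (0, j)).2 with hψdef
  have hφ0 : φ 0 = 0 := by
    show (h ((0 : ZMod n), (0 : ZMod n))).1 = 0
    rw [show ((0 : ZMod n), (0 : ZMod n)) = (0 : V n) from rfl, h0]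
    rfl
  have hψ0 : ψ 0 = 0 := by
    show (h ((0 : ZMod n), (0 : ZMod n))).2 = 0
    rw [show ((0 : ZMod n), (0 : ZMod n)) = (0 : V n) from rfl, h0]
    rfl
  have hline0 : ∀ i : ZMod n, h (i, 0) = (φ i, 0) := fun i => Prod.ext rfl (hsnd0 i)
  have key1 : ∀ i j : ZMod n, (h (i, j)).1 = φ i := by
    intro i j
    by_cases hj : j = 0
    · subst hj; rfl
    by_cases hi : i = 0
    · subst hi; rw [hfst0 j, hφ0]
    obtain ⟨k', hk'⟩ := lineMap h3 hbij.injective pres (p := (i, (0 : ZMod n)))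
      (q := (i, j)) 1 (fun e => hj ((congrArg Prod.snd e).symm)) rfl
    have h1 := hk' (i, j) rfl
    rcases fin3cases k' with rfl | rfl | rfl
    · exfalso
      have e0 : c 0 (h (i, j)) = 0 := by rw [h1]; exact hsnd0 i
      exact hj ((Hl 0 (i, j)).mpr e0)
    · exact h1
    · exfalso
      have h2 := hk' (i, i) rfl
      have e2 : c 2 (h (i, i)) = 0 := (Hl 2 (i, i)).mp (by show i - i = 0; ring)
      have e3 : c 2 (h (i, 0)) = 0 := by rw [← h2]; exact e2
      have e4 : h (i, (0 : ZMod n)) = h 0 := by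
        rw [h0]
        refine eq_of_two (show (0 : Fin 3) ≠ 2 by decide) ?_ ?_
        · rw [c_zero]; exact hsnd0 i
        · rw [c_zero]; exact e3
      exact hi (by simpa using congrArg Prod.fst (hbij.injective e4))
  have key2 : ∀ i j : ZMod n, (h (i, j)).2 = ψ j := by
    intro i j
    by_cases hj : j = 0
    · subst hj; rw [hsnd0 i, hψ0]
    by_cases hi : i = 0
    · subst hi; rfl
    obtain ⟨k', hk'⟩ := lineMap h3 hbij.injective pres (p := ((0 : ZMod n), j))
      (q := (i, j)) 0 (fun e => hi ((congrArg Prod.fst e).symm)) rfl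
    have h1 := hk' (i, j) rfl
    rcases fin3cases k' with rfl | rfl | rfl
    · exact h1
    · exfalso
      have e0 : c 1 (h (i, j)) = 0 := by rw [h1]; exact hfst0 j
      exact hi ((Hl 1 (i, j)).mpr e0)
    · exfalso
      have h2 := hk' (j, j) rfl
      have e2 : c 2 (h (j, j)) = 0 := (Hl 2 (j, j)).mp (by show j - j = 0; ring)
      have e3 : c 2 (h ((0 : ZMod n), j)) = 0 := by rw [← h2]; exact e2
      have e4 : h ((0 : ZMod n), j) = h 0 := by
        rw [h0]
        refine eq_of_two (show (1 : Fin 3) ≠ 2 by decide) ?_ ?_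
        · rw [c_zero]; exact hfst0 j
        · rw [c_zero]; exact e3
      exact hj (by simpa using congrArg Prod.snd (hbij.injective e4))
  have hpoint : ∀ p : V n, h p = (φ p.1, ψ p.2) :=
    fun p => Prod.ext (key1 p.1 p.2) (key2 p.1 p.2)
  have key3 : ∀ i j : ZMod n, φ (i - j) = φ i - ψ j := by
    intro i j
    by_cases hj : j = 0
    · subst hj; rw [hψ0, sub_zero, sub_zero]
    obtain ⟨k', hk'⟩ := lineMap h3 hbij.injective pres (p := ((i - j : ZMod n), (0 : ZMod n)))
      (q := (i, j)) 2 (fun e => hj ((congrArg Prod.snd e).symm))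
      (by show (i - j) - 0 = i - j; ring)
    have h1 := hk' (i, j) (by show i - j = (i - j) - 0; ring)
    rcases fin3cases k' with rfl | rfl | rfl
    · exfalso
      have e0 : c 0 (h (i, j)) = 0 := by rw [h1]; exact hsnd0 (i - j)
      exact hj ((Hl 0 (i, j)).mpr e0)
    · exfalso
      have e1 : φ i = φ (i - j) := (key1 i j).symm.trans h1
      have e4 : h (i, (0 : ZMod n)) = h ((i - j : ZMod n), (0 : ZMod n)) := by
        rw [hline0, hline0, e1]
      have := congrArg Prod.fst (hbij.injective e4)
      simp only at this
      exact hj (by linear_combination this)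
    · have e1 : c 2 (h (i, j)) = φ i - ψ j := by
        rw [hpoint (i, j)]; rfl
      have e2 : c 2 (h ((i - j : ZMod n), (0 : ZMod n))) = φ (i - j) := by
        rw [hline0]
        show φ (i - j) - 0 = φ (i - j)
        ring
      linear_combination e1 - e2 - h1
  have hψφ : ∀ i, ψ i = φ i := fun i => by
    have := key3 i i
    rw [sub_self, hφ0] at this
    linear_combination this
  have hneg : ∀ b : ZMod n, φ (-b) = -φ b := fun b => by
    have := key3 0 b
    rw [zero_sub, hφ0, hψφ, zero_sub] at this
    exact this
  have hadd : ∀ a b : ZMod n, φ (a + b) = φ a + φ b := by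
    intro a b
    have := key3 a (-b)
    rw [sub_neg_eq_add, hψφ, hneg, sub_neg_eq_add] at this
    exact this
  have hnat : ∀ m : ℕ, φ ((m : ZMod n)) = (m : ZMod n) * φ 1 := by
    intro m
    induction m with
    | zero => simpa using hφ0
    | succ k ih =>
      push_cast
      rw [hadd, ih]
      ring
  have hmul : ∀ x : ZMod n, φ x = x * φ 1 := fun x => by
    have := hnat x.val
    rwa [ZMod.natCast_val, ZMod.cast_id] at this
  obtain ⟨p, hp⟩ := hbij.surjective ((1 : ZMod n), (0 : ZMod n))
  rw [hpoint p] at hp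
  have hone : φ p.1 = 1 := congrArg Prod.fst hp
  have hunit : IsUnit (φ 1) :=
    IsUnit.of_mul_eq_one (b := p.1) (by rw [mul_comm, ← hmul p.1, hone])
  obtain ⟨u, hu⟩ := hunit
  refine ⟨u, funext fun p => ?_⟩
  rw [hpoint p]
  show (φ p.1, ψ p.2) = (↑u * p.1, ↑u * p.2)
  rw [hψφ, hmul p.1, hmul p.2, hu]
  exact Prod.ext (mul_comm _ _) (mul_comm _ _)

lemma CORE_case (hn : 4 ≤ n) (h : V n ≃ V n) (h0 : h 0 = 0)
    (presF : ∀ x y z : V n, x ≠ y → x ≠ z → y ≠ z → algCol x y z → algCol (h x) (h y) (h z))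
    (Mi Mfwd : V n → V n) (i : Fin 3) (j : Fin 2)
    (hMM : ∀ q, Mfwd (Mi q) = q) (hMM' : ∀ q, Mi (Mfwd q) = q)
    (hMi0 : Mi 0 = 0)
    (rel : ∀ k : Fin 3, ∃ (k' : Fin 3) (ε : ZMod n), ∀ p, c k' (Mi p) = ε * c k p)
    (HlM : ∀ (k : Fin 3) (p : V n), c k p = 0 ↔ c k (Mi (h p)) = 0)
    (hform : ∀ (u : (ZMod n)ˣ) (p : V n),
      Mfwd (psiMap n u p) = psiMap n u ((alphaMap n)^[(i : ℕ)] ((sigmaMap n)^[(j : ℕ)] p))) :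
    ∃ (u : (ZMod n)ˣ) (i' : Fin 3) (j' : Fin 2),
      ⇑h = psiMap n u ∘ (alphaMap n)^[(i' : ℕ)] ∘ (sigmaMap n)^[(j' : ℕ)] := by
  have gbij : Function.Bijective (fun p => Mi (h p)) := by
    constructor
    · intro p q e
      apply h.injective
      have e2 : Mfwd (Mi (h p)) = Mfwd (Mi (h q)) := congrArg Mfwd e
      rwa [hMM, hMM] at e2
    · intro q
      exact ⟨h.symm (Mfwd q), by simp only [Equiv.apply_symm_apply, hMM']⟩
  have g0 : Mi (h 0) = 0 := by rw [h0, hMi0]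
  have gpres : ∀ x y z : V n, x ≠ y → x ≠ z → y ≠ z →
      algCol x y z → algCol (Mi (h x)) (Mi (h y)) (Mi (h z)) := by
    intro x y z a b cc hc
    obtain ⟨k, e1, e2⟩ := presF x y z a b cc hc
    obtain ⟨k', ε, hr⟩ := rel k
    exact ⟨k', by rw [hr, hr, e1], by rw [hr, hr, e2]⟩
  obtain ⟨u, hu⟩ := COORD hn (fun p => Mi (h p)) gbij g0 gpres (fun k p => HlM k p)
  refine ⟨u, i, j, funext fun p => ?_⟩
  have hp : Mi (h p) = psiMap n u p := congrFun hu p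
  have h2 : Mfwd (Mi (h p)) = Mfwd (psiMap n u p) := congrArg _ hp
  rw [hMM] at h2
  rw [Function.comp_apply, Function.comp_apply, ← hform, ← h2]

/-- the central structure theorem for normalized equivalences. -/
lemma CORE (hn : 4 ≤ n) (h : V n ≃ V n) (h0 : h 0 = 0)
    (pres : ∀ x y z : V n, x ≠ y → x ≠ z → y ≠ z →
      (algCol x y z ↔ algCol (h x) (h y) (h z))) :
    ∃ (u : (ZMod n)ˣ) (i : Fin 3) (j : Fin 2),
      ⇑h = psiMap n u ∘ (alphaMap n)^[(i : ℕ)] ∘ (sigmaMap n)^[(j : ℕ)] := by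
  haveI : NeZero n := ⟨by omega⟩
  haveI : Fact (1 < n) := ⟨by omega⟩
  have h3 : 3 ≤ n := by omega
  have presF : ∀ x y z : V n, x ≠ y → x ≠ z → y ≠ z →
      algCol x y z → algCol (h x) (h y) (h z) :=
    fun x y z a b cc hc => (pres x y z a b cc).mp hc
  have presS : ∀ x y z : V n, x ≠ y → x ≠ z → y ≠ z →
      algCol x y z → algCol (h.symm x) (h.symm y) (h.symm z) := by
    intro x y z a b cc hc
    refine (pres (h.symm x) (h.symm y) (h.symm z)
      (fun e => a (by rw [← h.apply_symm_apply x, ← h.apply_symm_apply y, e]))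
      (fun e => b (by rw [← h.apply_symm_apply x, ← h.apply_symm_apply z, e]))
      (fun e => cc (by rw [← h.apply_symm_apply y, ← h.apply_symm_apply z, e]))).mpr ?_
    rw [h.apply_symm_apply, h.apply_symm_apply, h.apply_symm_apply]
    exact hc
  have hone : (1 : ZMod n) ≠ 0 := one_ne_zero
  have hbase : ∀ k : Fin 3, ∃ p : V n, p ≠ 0 ∧ c k p = 0 := by
    intro k
    rcases fin3cases k with rfl | rfl | rfl
    · exact ⟨((1 : ZMod n), (0 : ZMod n)), fun e => hone (congrArg Prod.fst e), rfl⟩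
    · exact ⟨((0 : ZMod n), (1 : ZMod n)), fun e => hone (congrArg Prod.snd e), rfl⟩
    · exact ⟨((1 : ZMod n), (1 : ZMod n)), fun e => hone (congrArg Prod.fst e),
        by show (1 : ZMod n) - 1 = 0; ring⟩
  have hπex : ∀ (H : V n ≃ V n), H 0 = 0 →
      (∀ x y z : V n, x ≠ y → x ≠ z → y ≠ z → algCol x y z → algCol (H x) (H y) (H z)) →
      ∀ k : Fin 3, ∃ k', ∀ r : V n, c k r = 0 → c k' (H r) = 0 := by
    intro H H0 Hpres k
    obtain ⟨p, hp0, hpk⟩ := hbase k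
    obtain ⟨k', hk'⟩ := lineMap h3 H.injective Hpres (p := (0 : V n)) (q := p) k
      (fun e => hp0 e.symm) (by rw [c_zero, hpk])
    refine ⟨k', fun r hr => ?_⟩
    have := hk' r (by rw [hr, c_zero])
    rwa [H0, c_zero] at this
  obtain ⟨π, hπ⟩ := Classical.axiomOfChoice (hπex h h0 presF)
  obtain ⟨π', hπ'⟩ := Classical.axiomOfChoice (hπex h.symm (by
      have := congrArg h.symm h0
      rw [h.symm_apply_apply] at this
      exact this.symm) presS)
  have hππ' : ∀ k, π' (π k) = k := by
    intro k
    obtain ⟨p, hp0, hpk⟩ := hbase k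
    have h1 : c (π k) (h p) = 0 := hπ k p hpk
    have h2 : c (π' (π k)) (h.symm (h p)) = 0 := hπ' (π k) (h p) h1
    rw [h.symm_apply_apply] at h2
    exact class_unique hp0 h2 hpk
  have hπinj : Function.Injective π := fun a b e => by rw [← hππ' a, e, hππ' b]
  have Hiff : ∀ (k : Fin 3) (p : V n), c k p = 0 ↔ c (π k) (h p) = 0 := by
    intro k p
    refine ⟨hπ k p, fun hh => ?_⟩
    have := hπ' (π k) (h p) hh
    rwa [h.symm_apply_apply, hππ'] at this
  rcases fin3cases (π 0) with p0 | p0 | p0 <;>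
    rcases fin3cases (π 1) with p1 | p1 | p1 <;>
    rcases fin3cases (π 2) with p2 | p2 | p2 <;>
  first
  | exact absurd (hπinj (p0.trans p1.symm)) (by decide)
  | exact absurd (hπinj (p0.trans p2.symm)) (by decide)
  | exact absurd (hπinj (p1.trans p2.symm)) (by decide)
  | skip
  · -- case A : π = (0, 1, 2)
    refine CORE_case hn h h0 presF (fun q : V n => ((q).1, (q).2)) (fun q : V n => ((q).1, (q).2)) 0 0 ?_ ?_ ?_ ?_ ?_ ?_
    · intro q
      refine Prod.ext ?_ ?_
      · show (((q).1, (q).2)).1 = q.1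
        ring
      · show (((q).1, (q).2)).2 = q.2
        ring
    · intro q
      refine Prod.ext ?_ ?_
      · show (((q).1, (q).2)).1 = q.1
        ring
      · show (((q).1, (q).2)).2 = q.2
        ring
    · refine Prod.ext ?_ ?_
      · show ((0 : V n)).1 = (0 : V n).1
        simp only [Prod.fst_zero, Prod.snd_zero]
        all_goals ring
      · show ((0 : V n)).2 = (0 : V n).2
        simp only [Prod.fst_zero, Prod.snd_zero]
        all_goals ring
    · intro k
      rcases fin3cases k with rfl | rfl | rfl
      · refine ⟨0, 1, fun p => ?_⟩
        show (p).2 = 1 * ((p).2)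
        ring
      · refine ⟨1, 1, fun p => ?_⟩
        show (p).1 = 1 * ((p).1)
        ring
      · refine ⟨2, 1, fun p => ?_⟩
        show ((p).1) - ((p).2) = 1 * ((p).1 - (p).2)
        ring
    · intro k p
      rcases fin3cases k with rfl | rfl | rfl
      · have H := Hiff 0 p
        rw [p0] at H
        refine H.trans ?_
        show (h p).2 = 0 ↔ (h p).2 = 0
        constructor <;> intro e <;>
          first
          | linear_combination e
          | linear_combination -e
      · have H := Hiff 1 p
        rw [p1] at H
        refine H.trans ?_
        show (h p).1 = 0 ↔ (h p).1 = 0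
        constructor <;> intro e <;>
          first
          | linear_combination e
          | linear_combination -e
      · have H := Hiff 2 p
        rw [p2] at H
        refine H.trans ?_
        show (h p).1 - (h p).2 = 0 ↔ ((h p).1) - ((h p).2) = 0
        constructor <;> intro e <;>
          first
          | linear_combination e
          | linear_combination -e
    · intro u p
      simp only [Function.iterate_succ, Function.iterate_zero, Function.comp_apply,
        id_eq, Fin.val_zero, Fin.val_one, Fin.val_two, Fin.isValue,
        psiMap, alphaMap, sigmaMap, Prod.mk.injEq]
      all_goals exact ⟨by ring, by ring⟩
  · -- case D : π = (0, 2, 1)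
    refine CORE_case hn h h0 presF (fun q : V n => ((q).1 - (q).2, -(q).2)) (fun q : V n => ((q).1 - (q).2, -(q).2)) 2 1 ?_ ?_ ?_ ?_ ?_ ?_
    · intro q
      refine Prod.ext ?_ ?_
      · show (((q).1 - (q).2, -(q).2)).1 - (((q).1 - (q).2, -(q).2)).2 = q.1
        ring
      · show -(((q).1 - (q).2, -(q).2)).2 = q.2
        ring
    · intro q
      refine Prod.ext ?_ ?_
      · show (((q).1 - (q).2, -(q).2)).1 - (((q).1 - (q).2, -(q).2)).2 = q.1
        ring
      · show -(((q).1 - (q).2, -(q).2)).2 = q.2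
        ring
    · refine Prod.ext ?_ ?_
      · show ((0 : V n)).1 - ((0 : V n)).2 = (0 : V n).1
        simp only [Prod.fst_zero, Prod.snd_zero]
        all_goals ring
      · show -((0 : V n)).2 = (0 : V n).2
        simp only [Prod.fst_zero, Prod.snd_zero]
        all_goals ring
    · intro k
      rcases fin3cases k with rfl | rfl | rfl
      · refine ⟨0, (-1), fun p => ?_⟩
        show -(p).2 = (-1) * ((p).2)
        ring
      · refine ⟨2, 1, fun p => ?_⟩
        show ((p).1 - (p).2) - (-(p).2) = 1 * ((p).1)
        ring
      · refine ⟨1, 1, fun p => ?_⟩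
        show (p).1 - (p).2 = 1 * ((p).1 - (p).2)
        ring
    · intro k p
      rcases fin3cases k with rfl | rfl | rfl
      · have H := Hiff 0 p
        rw [p0] at H
        refine H.trans ?_
        show (h p).2 = 0 ↔ -(h p).2 = 0
        constructor <;> intro e <;>
          first
          | linear_combination e
          | linear_combination -e
      · have H := Hiff 1 p
        rw [p1] at H
        refine H.trans ?_
        show (h p).1 - (h p).2 = 0 ↔ (h p).1 - (h p).2 = 0
        constructor <;> intro e <;>
          first
          | linear_combination e
          | linear_combination -e
      · have H := Hiff 2 p
        rw [p2] at H
        refine H.trans ?_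
        show (h p).1 = 0 ↔ ((h p).1 - (h p).2) - (-(h p).2) = 0
        constructor <;> intro e <;>
          first
          | linear_combination e
          | linear_combination -e
    · intro u p
      simp only [Function.iterate_succ, Function.iterate_zero, Function.comp_apply,
        id_eq, Fin.val_zero, Fin.val_one, Fin.val_two, Fin.isValue,
        psiMap, alphaMap, sigmaMap, Prod.mk.injEq]
      all_goals exact ⟨by ring, by ring⟩
  · -- case B : π = (1, 0, 2)
    refine CORE_case hn h h0 presF (fun q : V n => ((q).2, (q).1)) (fun q : V n => ((q).2, (q).1)) 0 1 ?_ ?_ ?_ ?_ ?_ ?_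
    · intro q
      refine Prod.ext ?_ ?_
      · show (((q).2, (q).1)).2 = q.1
        ring
      · show (((q).2, (q).1)).1 = q.2
        ring
    · intro q
      refine Prod.ext ?_ ?_
      · show (((q).2, (q).1)).2 = q.1
        ring
      · show (((q).2, (q).1)).1 = q.2
        ring
    · refine Prod.ext ?_ ?_
      · show ((0 : V n)).2 = (0 : V n).1
        simp only [Prod.fst_zero, Prod.snd_zero]
        all_goals ring
      · show ((0 : V n)).1 = (0 : V n).2
        simp only [Prod.fst_zero, Prod.snd_zero]
        all_goals ring
    · intro k
      rcases fin3cases k with rfl | rfl | rfl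
      · refine ⟨1, 1, fun p => ?_⟩
        show (p).2 = 1 * ((p).2)
        ring
      · refine ⟨0, 1, fun p => ?_⟩
        show (p).1 = 1 * ((p).1)
        ring
      · refine ⟨2, (-1), fun p => ?_⟩
        show ((p).2) - ((p).1) = (-1) * ((p).1 - (p).2)
        ring
    · intro k p
      rcases fin3cases k with rfl | rfl | rfl
      · have H := Hiff 0 p
        rw [p0] at H
        refine H.trans ?_
        show (h p).1 = 0 ↔ (h p).1 = 0
        constructor <;> intro e <;>
          first
          | linear_combination e
          | linear_combination -e
      · have H := Hiff 1 p
        rw [p1] at H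
        refine H.trans ?_
        show (h p).2 = 0 ↔ (h p).2 = 0
        constructor <;> intro e <;>
          first
          | linear_combination e
          | linear_combination -e
      · have H := Hiff 2 p
        rw [p2] at H
        refine H.trans ?_
        show (h p).1 - (h p).2 = 0 ↔ ((h p).2) - ((h p).1) = 0
        constructor <;> intro e <;>
          first
          | linear_combination e
          | linear_combination -e
    · intro u p
      simp only [Function.iterate_succ, Function.iterate_zero, Function.comp_apply,
        id_eq, Fin.val_zero, Fin.val_one, Fin.val_two, Fin.isValue,
        psiMap, alphaMap, sigmaMap, Prod.mk.injEq]
      all_goals exact ⟨by ring, by ring⟩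
  · -- case E : π = (1, 2, 0)
    refine CORE_case hn h h0 presF (fun q : V n => ((q).2 - (q).1, -(q).1)) (fun q : V n => (-(q).2, (q).1 - (q).2)) 1 0 ?_ ?_ ?_ ?_ ?_ ?_
    · intro q
      refine Prod.ext ?_ ?_
      · show -(((q).2 - (q).1, -(q).1)).2 = q.1
        ring
      · show (((q).2 - (q).1, -(q).1)).1 - (((q).2 - (q).1, -(q).1)).2 = q.2
        ring
    · intro q
      refine Prod.ext ?_ ?_
      · show ((-(q).2, (q).1 - (q).2)).2 - ((-(q).2, (q).1 - (q).2)).1 = q.1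
        ring
      · show -((-(q).2, (q).1 - (q).2)).1 = q.2
        ring
    · refine Prod.ext ?_ ?_
      · show ((0 : V n)).2 - ((0 : V n)).1 = (0 : V n).1
        simp only [Prod.fst_zero, Prod.snd_zero]
        all_goals ring
      · show -((0 : V n)).1 = (0 : V n).2
        simp only [Prod.fst_zero, Prod.snd_zero]
        all_goals ring
    · intro k
      rcases fin3cases k with rfl | rfl | rfl
      · refine ⟨2, 1, fun p => ?_⟩
        show ((p).2 - (p).1) - (-(p).1) = 1 * ((p).2)
        ring
      · refine ⟨0, (-1), fun p => ?_⟩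
        show -(p).1 = (-1) * ((p).1)
        ring
      · refine ⟨1, (-1), fun p => ?_⟩
        show (p).2 - (p).1 = (-1) * ((p).1 - (p).2)
        ring
    · intro k p
      rcases fin3cases k with rfl | rfl | rfl
      · have H := Hiff 0 p
        rw [p0] at H
        refine H.trans ?_
        show (h p).1 = 0 ↔ -(h p).1 = 0
        constructor <;> intro e <;>
          first
          | linear_combination e
          | linear_combination -e
      · have H := Hiff 1 p
        rw [p1] at H
        refine H.trans ?_
        show (h p).1 - (h p).2 = 0 ↔ (h p).2 - (h p).1 = 0
        constructor <;> intro e <;>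
          first
          | linear_combination e
          | linear_combination -e
      · have H := Hiff 2 p
        rw [p2] at H
        refine H.trans ?_
        show (h p).2 = 0 ↔ ((h p).2 - (h p).1) - (-(h p).1) = 0
        constructor <;> intro e <;>
          first
          | linear_combination e
          | linear_combination -e
    · intro u p
      simp only [Function.iterate_succ, Function.iterate_zero, Function.comp_apply,
        id_eq, Fin.val_zero, Fin.val_one, Fin.val_two, Fin.isValue,
        psiMap, alphaMap, sigmaMap, Prod.mk.injEq]
      all_goals exact ⟨by ring, by ring⟩
  · -- case F : π = (2, 0, 1)
    refine CORE_case hn h h0 presF (fun q : V n => (-(q).2, (q).1 - (q).2)) (fun q : V n => ((q).2 - (q).1, -(q).1)) 2 0 ?_ ?_ ?_ ?_ ?_ ?_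
    · intro q
      refine Prod.ext ?_ ?_
      · show ((-(q).2, (q).1 - (q).2)).2 - ((-(q).2, (q).1 - (q).2)).1 = q.1
        ring
      · show -((-(q).2, (q).1 - (q).2)).1 = q.2
        ring
    · intro q
      refine Prod.ext ?_ ?_
      · show -(((q).2 - (q).1, -(q).1)).2 = q.1
        ring
      · show (((q).2 - (q).1, -(q).1)).1 - (((q).2 - (q).1, -(q).1)).2 = q.2
        ring
    · refine Prod.ext ?_ ?_
      · show -((0 : V n)).2 = (0 : V n).1
        simp only [Prod.fst_zero, Prod.snd_zero]
        all_goals ring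
      · show ((0 : V n)).1 - ((0 : V n)).2 = (0 : V n).2
        simp only [Prod.fst_zero, Prod.snd_zero]
        all_goals ring
    · intro k
      rcases fin3cases k with rfl | rfl | rfl
      · refine ⟨1, (-1), fun p => ?_⟩
        show -(p).2 = (-1) * ((p).2)
        ring
      · refine ⟨2, (-1), fun p => ?_⟩
        show (-(p).2) - ((p).1 - (p).2) = (-1) * ((p).1)
        ring
      · refine ⟨0, 1, fun p => ?_⟩
        show (p).1 - (p).2 = 1 * ((p).1 - (p).2)
        ring
    · intro k p
      rcases fin3cases k with rfl | rfl | rfl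
      · have H := Hiff 0 p
        rw [p0] at H
        refine H.trans ?_
        show (h p).1 - (h p).2 = 0 ↔ (h p).1 - (h p).2 = 0
        constructor <;> intro e <;>
          first
          | linear_combination e
          | linear_combination -e
      · have H := Hiff 1 p
        rw [p1] at H
        refine H.trans ?_
        show (h p).2 = 0 ↔ -(h p).2 = 0
        constructor <;> intro e <;>
          first
          | linear_combination e
          | linear_combination -e
      · have H := Hiff 2 p
        rw [p2] at H
        refine H.trans ?_
        show (h p).1 = 0 ↔ (-(h p).2) - ((h p).1 - (h p).2) = 0
        constructor <;> intro e <;>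
          first
          | linear_combination e
          | linear_combination -e
    · intro u p
      simp only [Function.iterate_succ, Function.iterate_zero, Function.comp_apply,
        id_eq, Fin.val_zero, Fin.val_one, Fin.val_two, Fin.isValue,
        psiMap, alphaMap, sigmaMap, Prod.mk.injEq]
      all_goals exact ⟨by ring, by ring⟩
  · -- case C : π = (2, 1, 0)
    refine CORE_case hn h h0 presF (fun q : V n => (-(q).1, (q).2 - (q).1)) (fun q : V n => (-(q).1, (q).2 - (q).1)) 1 1 ?_ ?_ ?_ ?_ ?_ ?_
    · intro q
      refine Prod.ext ?_ ?_
      · show -((-(q).1, (q).2 - (q).1)).1 = q.1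
        ring
      · show ((-(q).1, (q).2 - (q).1)).2 - ((-(q).1, (q).2 - (q).1)).1 = q.2
        ring
    · intro q
      refine Prod.ext ?_ ?_
      · show -((-(q).1, (q).2 - (q).1)).1 = q.1
        ring
      · show ((-(q).1, (q).2 - (q).1)).2 - ((-(q).1, (q).2 - (q).1)).1 = q.2
        ring
    · refine Prod.ext ?_ ?_
      · show -((0 : V n)).1 = (0 : V n).1
        simp only [Prod.fst_zero, Prod.snd_zero]
        all_goals ring
      · show ((0 : V n)).2 - ((0 : V n)).1 = (0 : V n).2
        simp only [Prod.fst_zero, Prod.snd_zero]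
        all_goals ring
    · intro k
      rcases fin3cases k with rfl | rfl | rfl
      · refine ⟨2, (-1), fun p => ?_⟩
        show (-(p).1) - ((p).2 - (p).1) = (-1) * ((p).2)
        ring
      · refine ⟨1, (-1), fun p => ?_⟩
        show -(p).1 = (-1) * ((p).1)
        ring
      · refine ⟨0, (-1), fun p => ?_⟩
        show (p).2 - (p).1 = (-1) * ((p).1 - (p).2)
        ring
    · intro k p
      rcases fin3cases k with rfl | rfl | rfl
      · have H := Hiff 0 p
        rw [p0] at H
        refine H.trans ?_
        show (h p).1 - (h p).2 = 0 ↔ (h p).2 - (h p).1 = 0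
        constructor <;> intro e <;>
          first
          | linear_combination e
          | linear_combination -e
      · have H := Hiff 1 p
        rw [p1] at H
        refine H.trans ?_
        show (h p).1 = 0 ↔ -(h p).1 = 0
        constructor <;> intro e <;>
          first
          | linear_combination e
          | linear_combination -e
      · have H := Hiff 2 p
        rw [p2] at H
        refine H.trans ?_
        show (h p).2 = 0 ↔ (-(h p).1) - ((h p).2 - (h p).1) = 0
        constructor <;> intro e <;>
          first
          | linear_combination e
          | linear_combination -e
    · intro u p
      simp only [Function.iterate_succ, Function.iterate_zero, Function.comp_apply,
        id_eq, Fin.val_zero, Fin.val_one, Fin.val_two, Fin.isValue,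
        psiMap, alphaMap, sigmaMap, Prod.mk.injEq]
      all_goals exact ⟨by ring, by ring⟩

lemma fin2cases (m : Fin 2) : m = 0 ∨ m = 1 := by omega

lemma unit_ne_zero (hn : 4 ≤ n) (u : (ZMod n)ˣ) : (u : ZMod n) ≠ 0 := by
  haveI : Fact (1 < n) := ⟨by omega⟩
  intro e
  have hm := u.mul_inv
  rw [e, zero_mul] at hm
  exact one_ne_zero hm.symm

lemma rep_inj (hn : 4 ≤ n) (a b a' b' : ZMod n) (u u' : (ZMod n)ˣ)
    (i i' : Fin 3) (j j' : Fin 2)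
    (H : tMap n a b ∘ psiMap n u ∘ (alphaMap n)^[(i : ℕ)] ∘ (sigmaMap n)^[(j : ℕ)] =
         tMap n a' b' ∘ psiMap n u' ∘ (alphaMap n)^[(i' : ℕ)] ∘ (sigmaMap n)^[(j' : ℕ)]) :
    a = a' ∧ b = b' ∧ u = u' ∧ i = i' ∧ j = j' := by
  have h0 := congrFun H ((0 : ZMod n), (0 : ZMod n))
  have h1 := congrFun H ((1 : ZMod n), (0 : ZMod n))
  have h2 := congrFun H ((0 : ZMod n), (1 : ZMod n))
  rcases fin3cases i with rfl | rfl | rfl <;> rcases fin3cases i' with rfl | rfl | rfl <;>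
    rcases fin2cases j with rfl | rfl <;> rcases fin2cases j' with rfl | rfl <;>
    simp only [show ((0 : Fin 3) : ℕ) = 0 from rfl, show ((1 : Fin 3) : ℕ) = 1 from rfl,
      show ((2 : Fin 3) : ℕ) = 2 from rfl, show ((0 : Fin 2) : ℕ) = 0 from rfl,
      show ((1 : Fin 2) : ℕ) = 1 from rfl, Function.iterate_succ, Function.iterate_zero,
      Function.comp_apply, id_eq, tMap, psiMap, alphaMap, sigmaMap, Prod.mk.injEq,
      mul_zero, mul_one, zero_add, add_zero, neg_zero, sub_zero, zero_sub, sub_self,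
      mul_neg] at h0 h1 h2 <;>
  first
    | (refine ⟨?_, ?_, Units.ext ?_, rfl, rfl⟩ <;>
        first
        | linear_combination h0.1
        | linear_combination h0.2
        | linear_combination h1.1 - h0.1
        | linear_combination h1.2 - h0.2
        | linear_combination h2.1 - h0.1
        | linear_combination h2.2 - h0.2
        | linear_combination h0.1 - h1.1
        | linear_combination h0.2 - h1.2
        | linear_combination h0.1 - h2.1
        | linear_combination h0.2 - h2.2)
    | (exfalso;
        first
        | exact unit_ne_zero hn u (by linear_combination (h1.1 - h0.1))
        | exact unit_ne_zero hn u (by linear_combination -(h1.1 - h0.1))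
        | exact unit_ne_zero hn u' (by linear_combination (h1.1 - h0.1))
        | exact unit_ne_zero hn u' (by linear_combination -(h1.1 - h0.1))
        | exact unit_ne_zero hn u (by linear_combination (h1.2 - h0.2))
        | exact unit_ne_zero hn u (by linear_combination -(h1.2 - h0.2))
        | exact unit_ne_zero hn u' (by linear_combination (h1.2 - h0.2))
        | exact unit_ne_zero hn u' (by linear_combination -(h1.2 - h0.2))
        | exact unit_ne_zero hn u (by linear_combination (h2.1 - h0.1))
        | exact unit_ne_zero hn u (by linear_combination -(h2.1 - h0.1))
        | exact unit_ne_zero hn u' (by linear_combination (h2.1 - h0.1))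
        | exact unit_ne_zero hn u' (by linear_combination -(h2.1 - h0.1))
        | exact unit_ne_zero hn u (by linear_combination (h2.2 - h0.2))
        | exact unit_ne_zero hn u (by linear_combination -(h2.2 - h0.2))
        | exact unit_ne_zero hn u' (by linear_combination (h2.2 - h0.2))
        | exact unit_ne_zero hn u' (by linear_combination -(h2.2 - h0.2)))

lemma algCol_subconst (t x y z : V n) :
    algCol (x - t) (y - t) (z - t) ↔ algCol x y z := by
  constructor
  · rintro ⟨k, e1, e2⟩
    simp only [c_sub] at e1 e2
    exact ⟨k, by linear_combination e1, by linear_combination e2⟩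
  · rintro ⟨k, e1, e2⟩
    exact ⟨k, by simp only [c_sub]; rw [e1], by simp only [c_sub]; rw [e2]⟩

end GammaAut

/-- Every automorphism of `Γ(n)` is uniquely
`T_{a,b} ∘ ψ_u ∘ α^i ∘ σ^j` with `a, b ∈ ℤ_n`, `u` a unit of `ℤ_n`,
`i ∈ {0,1,2}`, `j ∈ {0,1}`. -/
theorem Gamma_aut_decomposition (n : ℕ) (hn : 4 ≤ n) :
    ∀ f : Gamma n ≃g Gamma n,
      ∃! t : (ZMod n × ZMod n) × (ZMod n)ˣ × Fin 3 × Fin 2,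
        ⇑f = tMap n t.1.1 t.1.2 ∘ psiMap n t.2.1 ∘
          (alphaMap n)^[(t.2.2.1 : ℕ)] ∘ (sigmaMap n)^[(t.2.2.2 : ℕ)] := by
  intro f
  classical
  open GammaAut in
  have key : ∃ (u : (ZMod n)ˣ) (i : Fin 3) (j : Fin 2),
      ⇑f = tMap n (f 0).1 (f 0).2 ∘ psiMap n u ∘
        (alphaMap n)^[(i : ℕ)] ∘ (sigmaMap n)^[(j : ℕ)] := by
    set h : GammaAut.V n ≃ GammaAut.V n :=
      f.toEquiv.trans (Equiv.subRight (f.toEquiv 0)) with hhdef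
    have hval : ∀ p, h p = f p - f 0 := fun p => rfl
    have h0 : h 0 = 0 := by rw [hval, sub_self]
    have pres : ∀ x y z : GammaAut.V n, x ≠ y → x ≠ z → y ≠ z →
        (GammaAut.algCol x y z ↔ GammaAut.algCol (h x) (h y) (h z)) := by
      intro x y z hxy hxz hyz
      constructor
      · intro hc
        have g1 : GammaAut.gcol x y z :=
          (GammaAut.gcol_iff hn x y z).mpr ⟨hxy, hxz, hyz, hc⟩
        have g2 := GammaAut.gcol_iso f g1
        have g3 := ((GammaAut.gcol_iff hn _ _ _).mp g2).2.2.2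
        have g4 := (GammaAut.algCol_subconst (f 0) (f x) (f y) (f z)).mpr g3
        rw [hval, hval, hval]
        exact g4
      · intro hc
        rw [hval, hval, hval] at hc
        have g3 := (GammaAut.algCol_subconst (f 0) (f x) (f y) (f z)).mp hc
        have g2 : GammaAut.gcol (f x) (f y) (f z) :=
          (GammaAut.gcol_iff hn _ _ _).mpr
            ⟨fun e => hxy (f.toEquiv.injective e), fun e => hxz (f.toEquiv.injective e),
             fun e => hyz (f.toEquiv.injective e), g3⟩
        exact ((GammaAut.gcol_iff hn x y z).mp ((GammaAut.gcol_iso_iff f).mp g2)).2.2.2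
    obtain ⟨u, i, j, hu⟩ := GammaAut.CORE hn h h0 pres
    refine ⟨u, i, j, funext fun p => ?_⟩
    have hp : h p = (psiMap n u ∘ (alphaMap n)^[(i : ℕ)] ∘ (sigmaMap n)^[(j : ℕ)]) p :=
      congrFun hu p
    rw [hval] at hp
    show f p = tMap n (f 0).1 (f 0).2
      ((psiMap n u ∘ (alphaMap n)^[(i : ℕ)] ∘ (sigmaMap n)^[(j : ℕ)]) p)
    rw [← hp]
    refine Prod.ext ?_ ?_
    · show (f p).1 = (f p - f 0).1 + (f 0).1
      rw [Prod.fst_sub]; ring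
    · show (f p).2 = (f p - f 0).2 + (f 0).2
      rw [Prod.snd_sub]; ring
  obtain ⟨u, i, j, hu⟩ := key
  refine ⟨⟨f 0, u, i, j⟩, hu, ?_⟩
  rintro ⟨ab, u', i', j'⟩ hH
  have HH : tMap n ab.1 ab.2 ∘ psiMap n u' ∘
      (alphaMap n)^[(i' : ℕ)] ∘ (sigmaMap n)^[(j' : ℕ)] =
      tMap n (f 0).1 (f 0).2 ∘ psiMap n u ∘
      (alphaMap n)^[(i : ℕ)] ∘ (sigmaMap n)^[(j : ℕ)] := by
    rw [← hH, ← hu]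
  obtain ⟨e1, e2, e3, e4, e5⟩ := GammaAut.rep_inj hn ab.1 ab.2 (f 0).1 (f 0).2 u' u i' i j' j HH
  refine Prod.ext (Prod.ext e1 e2) (Prod.ext e3 (Prod.ext e4 e5))
end

section
/- Let n ≥ 4 be composite and let m be a divisor of n with 1 < m < n. Then the pairs {(0,0),(m,0)} and {(0,0),(1,1)} are both edges of Γ(n), but there is no automorphism f of Γ(n) with {f(0,0), f(m,0)} = {(0,0),(1,1)}. -/
lemma gamma_adj {n : ℕ} {x y : ZMod n × ZMod n} :
    (Gamma n).Adj x y ↔ x ≠ y ∧ (x.2 = y.2 ∨ x.1 = y.1 ∨ x.1 - y.1 = x.2 - y.2) := by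
  show (x ≠ y ∧ (x - y ≠ 0 ∧ ((x - y).2 = 0 ∨ (x - y).1 = 0 ∨ (x - y).1 = (x - y).2))) ↔ _
  constructor
  · rintro ⟨h1, _, h⟩
    refine ⟨h1, ?_⟩
    simpa [Prod.fst_sub, Prod.snd_sub, sub_eq_zero] using h
  · rintro ⟨h1, h⟩
    refine ⟨h1, sub_ne_zero_of_ne h1, ?_⟩
    simpa [Prod.fst_sub, Prod.snd_sub, sub_eq_zero] using h

instance (n : ℕ) : DecidableRel (Gamma n).Adj := fun _ _ =>
  decidable_of_iff _ gamma_adj.symm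

/-- adjacency in coordinates -/
lemma gamma_adj' {n : ℕ} {a b c d : ZMod n} :
    (Gamma n).Adj (a, b) (c, d) ↔ (a, b) ≠ (c, d) ∧ (b = d ∨ a = c ∨ a - c = b - d) :=
  gamma_adj

/-- `u` is a common neighbour of `x` and `y`. -/
def CN (n : ℕ) (x y u : ZMod n × ZMod n) : Prop :=
  (Gamma n).Adj u x ∧ (Gamma n).Adj u y

/-- `u` is a common neighbour of the adjacent pair `x y` which has at most one
neighbour among the common neighbours of `x` and `y`.  (For `n ≥ 5` these are
exactly the two "off-line" common neighbours.) -/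
def IsApex (n : ℕ) (x y u : ZMod n × ZMod n) : Prop :=
  CN n x y u ∧
    ¬ ∃ w w', w ≠ w' ∧ CN n x y w ∧ CN n x y w' ∧ (Gamma n).Adj u w ∧ (Gamma n).Adj u w'


section classification

variable {n : ℕ} {t : ZMod n}

lemma adj_iff_mk {n : ℕ} {a b c d : ZMod n} :
    (Gamma n).Adj (a, b) (c, d) ↔ ((a ≠ c ∨ b ≠ d) ∧ (b = d ∨ a = c ∨ a - c = b - d)) := by
  rw [gamma_adj, Ne, Prod.ext_iff, not_and_or]

/-- classification of common neighbours of a "row" edge `{x, x+(t,0)}`. -/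
lemma cn_row {x u : ZMod n × ZMod n} (ht : t ≠ 0) (h : CN n x (x + (t, 0)) u) :
    (∃ p, p ≠ 0 ∧ p ≠ t ∧ u = x + (p, 0)) ∨ u = x + (t, t) ∨ u = x + (0, -t) := by
  obtain ⟨x1, x2⟩ := x
  obtain ⟨u1, u2⟩ := u
  obtain ⟨h1, h2⟩ := h
  rw [show ((x1, x2) + (t, 0) : ZMod n × ZMod n) = (x1 + t, x2) by simp] at h2
  rw [adj_iff_mk] at h1 h2
  obtain ⟨hne1, hc1⟩ := h1
  obtain ⟨hne2, hc2⟩ := h2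
  simp only [Prod.mk_add_mk, Prod.mk.injEq]
  rcases hc1 with hA | hA | hA
  · subst hA
    have hp1 : u1 ≠ x1 := by tauto
    have hp2 : u1 ≠ x1 + t := by tauto
    exact Or.inl ⟨u1 - x1, sub_ne_zero_of_ne hp1,
      fun hc => hp2 (by linear_combination hc), by constructor <;> ring⟩
  · subst hA
    have hq : u2 ≠ x2 := by tauto
    rcases hc2 with hB | hB | hB
    · exact absurd hB hq
    · exact absurd (by linear_combination -hB : t = 0) ht
    · exact Or.inr (Or.inr ⟨by ring, by linear_combination -hB⟩)
  · rcases hc2 with hB | hB | hB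
    · have hq : u2 ≠ x2 := by
        intro he; subst he
        exact (by tauto : u1 ≠ x1) (by linear_combination hA)
      exact absurd hB hq
    · exact Or.inr (Or.inl ⟨by linear_combination hB, by linear_combination hB - hA⟩)
    · exact absurd (by linear_combination hA - hB) ht

/-- classification of common neighbours of a "column" edge `{x, x+(0,t)}`. -/
lemma cn_col {x u : ZMod n × ZMod n} (ht : t ≠ 0) (h : CN n x (x + (0, t)) u) :
    (∃ q, q ≠ 0 ∧ q ≠ t ∧ u = x + (0, q)) ∨ u = x + (t, t) ∨ u = x + (-t, 0) := by
  obtain ⟨x1, x2⟩ := x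
  obtain ⟨u1, u2⟩ := u
  obtain ⟨h1, h2⟩ := h
  rw [show ((x1, x2) + (0, t) : ZMod n × ZMod n) = (x1, x2 + t) by simp] at h2
  rw [adj_iff_mk] at h1 h2
  obtain ⟨hne1, hc1⟩ := h1
  obtain ⟨hne2, hc2⟩ := h2
  simp only [Prod.mk_add_mk, Prod.mk.injEq]
  rcases hc1 with hA | hA | hA
  · subst hA
    have hp : u1 ≠ x1 := by tauto
    rcases hc2 with hB | hB | hB
    · exact absurd (by linear_combination -hB : t = 0) ht
    · exact absurd hB hp
    · exact Or.inr (Or.inr ⟨by linear_combination hB, by ring⟩)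
  · subst hA
    have hq1 : u2 ≠ x2 := by tauto
    have hq2 : u2 ≠ x2 + t := by tauto
    exact Or.inl ⟨u2 - x2, sub_ne_zero_of_ne hq1,
      fun hc => hq2 (by linear_combination hc), by constructor <;> ring⟩
  · rcases hc2 with hB | hB | hB
    · exact Or.inr (Or.inl ⟨by linear_combination hA + hB, hB⟩)
    · have hq : u2 ≠ x2 := by
        intro he; subst he
        exact (by tauto : u1 ≠ x1) (by linear_combination hA)
      exact absurd (by linear_combination hB - hA : u2 = x2) hq
    · exact absurd (by linear_combination hB - hA : t = 0) ht

/-- classification of common neighbours of a "diagonal" edge `{x, x+(t,t)}`. -/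
lemma cn_diag {x u : ZMod n × ZMod n} (ht : t ≠ 0) (h : CN n x (x + (t, t)) u) :
    (∃ p, p ≠ 0 ∧ p ≠ t ∧ u = x + (p, p)) ∨ u = x + (t, 0) ∨ u = x + (0, t) := by
  obtain ⟨x1, x2⟩ := x
  obtain ⟨u1, u2⟩ := u
  obtain ⟨h1, h2⟩ := h
  rw [show ((x1, x2) + (t, t) : ZMod n × ZMod n) = (x1 + t, x2 + t) by simp] at h2
  rw [adj_iff_mk] at h1 h2
  obtain ⟨hne1, hc1⟩ := h1
  obtain ⟨hne2, hc2⟩ := h2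
  simp only [Prod.mk_add_mk, Prod.mk.injEq]
  rcases hc1 with hA | hA | hA
  · subst hA
    have hp : u1 ≠ x1 := by tauto
    rcases hc2 with hB | hB | hB
    · exact absurd (by linear_combination -hB : t = 0) ht
    · exact Or.inr (Or.inl ⟨hB, by ring⟩)
    · exact absurd (by linear_combination hB : u1 = x1) hp
  · subst hA
    have hq : u2 ≠ x2 := by tauto
    rcases hc2 with hB | hB | hB
    · exact Or.inr (Or.inr ⟨by ring, hB⟩)
    · exact absurd (by linear_combination -hB : t = 0) ht
    · exact absurd (by linear_combination -hB : u2 = x2) hq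
  · have hq : u2 ≠ x2 := by
      intro he; subst he
      exact (by tauto : u1 ≠ x1) (by linear_combination hA)
    have hp2 : u2 ≠ x2 + t := by
      intro he
      refine (by tauto : u1 ≠ x1 + t ∨ u2 ≠ x2 + t).elim ?_ (fun h' => h' he)
      intro h'
      exact h' (by linear_combination hA + he)
    exact Or.inl ⟨u2 - x2, sub_ne_zero_of_ne hq,
      fun hc => hp2 (by linear_combination hc),
      ⟨by linear_combination hA, by ring⟩⟩

lemma adj_shift {x a b : ZMod n × ZMod n} :
    (Gamma n).Adj (x + a) (x + b) ↔ (Gamma n).Adj a b := by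
  simp only [gamma_adj, Prod.ext_iff, Prod.fst_add, Prod.snd_add, add_right_inj,
    add_sub_add_left_eq_sub, ne_eq, not_and_or]

lemma adj_shift' {x a : ZMod n × ZMod n} :
    (Gamma n).Adj (x + a) x ↔ (Gamma n).Adj a 0 := by
  have h := @adj_shift n x a 0
  rwa [add_zero] at h

/-- two elements avoiding three given ones, for `5 ≤ n` -/
lemma exists_two (hn : 5 ≤ n) (a b c : ZMod n) :
    ∃ d e : ZMod n, d ≠ e ∧ d ≠ a ∧ d ≠ b ∧ d ≠ c ∧ e ≠ a ∧ e ≠ b ∧ e ≠ c := by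
  haveI : NeZero n := ⟨by omega⟩
  classical
  set s : Finset (ZMod n) := {a, b, c} with hs
  have h1 := Finset.card_insert_le b ({c} : Finset (ZMod n))
  have h2 := Finset.card_insert_le a (insert b ({c} : Finset (ZMod n)))
  have hcard : s.card ≤ 3 := by
    simp only [Finset.card_singleton] at h1 h2 ⊢
    rw [hs]; omega
  have hc : 1 < sᶜ.card := by
    rw [Finset.card_compl]
    have : Fintype.card (ZMod n) = n := ZMod.card n
    omega
  obtain ⟨d, hd, e, he, hde⟩ := Finset.one_lt_card.mp hc
  rw [Finset.mem_compl, hs] at hd he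
  simp only [Finset.mem_insert, Finset.mem_singleton, not_or] at hd he
  exact ⟨d, e, hde, hd.1, hd.2.1, hd.2.2, he.1, he.2.1, he.2.2⟩

lemma adj_mk {a b c d : ZMod n} (h1 : a ≠ c ∨ b ≠ d)
    (h2 : b = d ∨ a = c ∨ a - c = b - d) : (Gamma n).Adj (a, b) (c, d) :=
  adj_iff_mk.mpr ⟨h1, h2⟩

lemma ne_shift {x a b : ZMod n × ZMod n} (h : a ≠ b) : x + a ≠ x + b :=
  fun hc => h (add_left_cancel hc)

/-- an apex of a row edge is one of the two named points -/
lemma apex_row (hn : 5 ≤ n) {x u : ZMod n × ZMod n} (ht : t ≠ 0)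
    (h : IsApex n x (x + (t, 0)) u) : u = x + (t, t) ∨ u = x + (0, -t) := by
  obtain ⟨hcn, hno⟩ := h
  rcases cn_row ht hcn with ⟨p, hp0, hpt, rfl⟩ | h | h
  · exfalso; apply hno
    obtain ⟨d, e, hde, hd0, hdt, hdp, he0, het, hep⟩ := exists_two hn 0 t p
    refine ⟨x + (d, 0), x + (e, 0), ne_shift (by simp [hde]), ?_, ?_, ?_, ?_⟩
    · exact ⟨adj_shift'.mpr (adj_mk (Or.inl hd0) (Or.inl rfl)),
        adj_shift.mpr (adj_mk (Or.inl hdt) (Or.inl rfl))⟩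
    · exact ⟨adj_shift'.mpr (adj_mk (Or.inl he0) (Or.inl rfl)),
        adj_shift.mpr (adj_mk (Or.inl het) (Or.inl rfl))⟩
    · exact adj_shift.mpr (adj_mk (Or.inl (fun hc => hdp hc.symm)) (Or.inl rfl))
    · exact adj_shift.mpr (adj_mk (Or.inl (fun hc => hep hc.symm)) (Or.inl rfl))
  · exact Or.inl h
  · exact Or.inr h

lemma apex_col (hn : 5 ≤ n) {x u : ZMod n × ZMod n} (ht : t ≠ 0)
    (h : IsApex n x (x + (0, t)) u) : u = x + (t, t) ∨ u = x + (-t, 0) := by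
  obtain ⟨hcn, hno⟩ := h
  rcases cn_col ht hcn with ⟨q, hq0, hqt, rfl⟩ | h | h
  · exfalso; apply hno
    obtain ⟨d, e, hde, hd0, hdt, hdq, he0, het, heq⟩ := exists_two hn 0 t q
    refine ⟨x + (0, d), x + (0, e), ne_shift (by simp [hde]), ?_, ?_, ?_, ?_⟩
    · exact ⟨adj_shift'.mpr (adj_mk (Or.inr hd0) (Or.inr (Or.inl rfl))),
        adj_shift.mpr (adj_mk (Or.inr hdt) (Or.inr (Or.inl rfl)))⟩
    · exact ⟨adj_shift'.mpr (adj_mk (Or.inr he0) (Or.inr (Or.inl rfl))),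
        adj_shift.mpr (adj_mk (Or.inr het) (Or.inr (Or.inl rfl)))⟩
    · exact adj_shift.mpr (adj_mk (Or.inr (fun hc => hdq hc.symm)) (Or.inr (Or.inl rfl)))
    · exact adj_shift.mpr (adj_mk (Or.inr (fun hc => heq hc.symm)) (Or.inr (Or.inl rfl)))
  · exact Or.inl h
  · exact Or.inr h

lemma apex_diag (hn : 5 ≤ n) {x u : ZMod n × ZMod n} (ht : t ≠ 0)
    (h : IsApex n x (x + (t, t)) u) : u = x + (t, 0) ∨ u = x + (0, t) := by
  obtain ⟨hcn, hno⟩ := h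
  rcases cn_diag ht hcn with ⟨p, hp0, hpt, rfl⟩ | h | h
  · exfalso; apply hno
    obtain ⟨d, e, hde, hd0, hdt, hdp, he0, het, hep⟩ := exists_two hn 0 t p
    refine ⟨x + (d, d), x + (e, e), ne_shift (by simp [hde]), ?_, ?_, ?_, ?_⟩
    · exact ⟨adj_shift'.mpr (adj_mk (Or.inl hd0) (Or.inr (Or.inr (by ring)))),
        adj_shift.mpr (adj_mk (Or.inl hdt) (Or.inr (Or.inr (by ring))))⟩
    · exact ⟨adj_shift'.mpr (adj_mk (Or.inl he0) (Or.inr (Or.inr (by ring)))),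
        adj_shift.mpr (adj_mk (Or.inl het) (Or.inr (Or.inr (by ring))))⟩
    · exact adj_shift.mpr (adj_mk (Or.inl (fun hc => hdp hc.symm)) (Or.inr (Or.inr (by ring))))
    · exact adj_shift.mpr (adj_mk (Or.inl (fun hc => hep hc.symm)) (Or.inr (Or.inr (by ring))))
  · exact Or.inl h
  · exact Or.inr h

lemma not_exists_of_unique {x y u v : ZMod n × ZMod n}
    (h : ∀ w, CN n x y w → (Gamma n).Adj u w → w = v) :
    ¬ ∃ w w', w ≠ w' ∧ CN n x y w ∧ CN n x y w' ∧ (Gamma n).Adj u w ∧ (Gamma n).Adj u w' := by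
  rintro ⟨w, w', hne, hw, hw', ha, ha'⟩
  exact hne ((h w hw ha).trans (h w' hw' ha').symm)

lemma isApex_row₁ {x : ZMod n × ZMod n} (ht : t ≠ 0) :
    IsApex n x (x + (t, 0)) (x + (t, t)) := by
  refine ⟨⟨adj_shift'.mpr (adj_mk (Or.inl ht) (Or.inr (Or.inr (by ring)))),
    adj_shift.mpr (adj_mk (Or.inr ht) (Or.inr (Or.inl rfl)))⟩,
    not_exists_of_unique (v := x + (0, -t)) fun w hw ha => ?_⟩
  rcases cn_row ht hw with ⟨p, hp0, hpt, rfl⟩ | rfl | rfl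
  · rw [adj_shift, adj_iff_mk] at ha
    rcases ha.2 with hB | hB | hB
    · exact absurd hB ht
    · exact absurd hB.symm hpt
    · exact absurd (by linear_combination -hB : p = 0) hp0
  · exact absurd ha (Gamma n).irrefl
  · rfl

lemma isApex_row₂ {x : ZMod n × ZMod n} (ht : t ≠ 0) :
    IsApex n x (x + (t, 0)) (x + (0, -t)) := by
  refine ⟨⟨adj_shift'.mpr (adj_mk (Or.inr (neg_ne_zero.mpr ht)) (Or.inr (Or.inl rfl))),
    adj_shift.mpr (adj_mk (Or.inl (fun hc => ht hc.symm)) (Or.inr (Or.inr (by ring))))⟩,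
    not_exists_of_unique (v := x + (t, t)) fun w hw ha => ?_⟩
  rcases cn_row ht hw with ⟨p, hp0, hpt, rfl⟩ | rfl | rfl
  · rw [adj_shift, adj_iff_mk] at ha
    rcases ha.2 with hB | hB | hB
    · exact absurd (by linear_combination -hB : t = 0) ht
    · exact absurd hB.symm hp0
    · exact absurd (by linear_combination -hB : p = t) hpt
  · rfl
  · exact absurd ha (Gamma n).irrefl

lemma isApex_col₁ {x : ZMod n × ZMod n} (ht : t ≠ 0) :
    IsApex n x (x + (0, t)) (x + (t, t)) := by
  refine ⟨⟨adj_shift'.mpr (adj_mk (Or.inl ht) (Or.inr (Or.inr (by ring)))),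
    adj_shift.mpr (adj_mk (Or.inl ht) (Or.inl rfl))⟩,
    not_exists_of_unique (v := x + (-t, 0)) fun w hw ha => ?_⟩
  rcases cn_col ht hw with ⟨q, hq0, hqt, rfl⟩ | rfl | rfl
  · rw [adj_shift, adj_iff_mk] at ha
    rcases ha.2 with hB | hB | hB
    · exact absurd hB.symm hqt
    · exact absurd hB ht
    · exact absurd (by linear_combination hB : q = 0) hq0
  · exact absurd ha (Gamma n).irrefl
  · rfl

lemma isApex_diag₁ {x : ZMod n × ZMod n} (ht : t ≠ 0) :
    IsApex n x (x + (t, t)) (x + (t, 0)) := by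
  refine ⟨⟨adj_shift'.mpr (adj_mk (Or.inl ht) (Or.inl rfl)),
    adj_shift.mpr (adj_mk (Or.inr (fun hc => ht hc.symm)) (Or.inr (Or.inl rfl)))⟩,
    not_exists_of_unique (v := x + (0, t)) fun w hw ha => ?_⟩
  rcases cn_diag ht hw with ⟨p, hp0, hpt, rfl⟩ | rfl | rfl
  · rw [adj_shift, adj_iff_mk] at ha
    rcases ha.2 with hB | hB | hB
    · exact absurd hB.symm hp0
    · exact absurd hB.symm hpt
    · exact absurd (by linear_combination hB : t = 0) ht
  · exact absurd ha (Gamma n).irrefl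
  · rfl

lemma isApex_diag₂ {x : ZMod n × ZMod n} (ht : t ≠ 0) :
    IsApex n x (x + (t, t)) (x + (0, t)) := by
  refine ⟨⟨adj_shift'.mpr (adj_mk (Or.inr ht) (Or.inr (Or.inl rfl))),
    adj_shift.mpr (adj_mk (Or.inl (fun hc => ht hc.symm)) (Or.inl rfl))⟩,
    not_exists_of_unique (v := x + (t, 0)) fun w hw ha => ?_⟩
  rcases cn_diag ht hw with ⟨p, hp0, hpt, rfl⟩ | rfl | rfl
  · rw [adj_shift, adj_iff_mk] at ha
    rcases ha.2 with hB | hB | hB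
    · exact absurd hB.symm hpt
    · exact absurd hB.symm hp0
    · exact absurd (by linear_combination -hB : t = 0) ht
  · rfl
  · exact absurd ha (Gamma n).irrefl

end classification

/-- points reachable from `{a, b}` by repeatedly adding apexes of edges. -/
inductive Reach (n : ℕ) (a b : ZMod n × ZMod n) : ZMod n × ZMod n → Prop
  | base1 : Reach n a b a
  | base2 : Reach n a b b
  | apex {x y u : ZMod n × ZMod n} : Reach n a b x → Reach n a b y →
      (Gamma n).Adj x y → IsApex n x y u → Reach n a b u

section invariance

variable {n : ℕ}

lemma cn_map (f : Gamma n ≃g Gamma n) {x y u : ZMod n × ZMod n} (h : CN n x y u) :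
    CN n (f x) (f y) (f u) :=
  ⟨f.map_rel_iff.mpr h.1, f.map_rel_iff.mpr h.2⟩

lemma isApex_map (f : Gamma n ≃g Gamma n) {x y u : ZMod n × ZMod n}
    (h : IsApex n x y u) : IsApex n (f x) (f y) (f u) := by
  obtain ⟨hcn, hno⟩ := h
  refine ⟨cn_map f hcn, ?_⟩
  rintro ⟨w, w', hne, hw, hw', ha, ha'⟩
  apply hno
  refine ⟨f.symm w, f.symm w', fun hc => hne (by simpa using congrArg f hc), ?_, ?_, ?_, ?_⟩
  · have := cn_map f.symm hw; simpa using this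
  · have := cn_map f.symm hw'; simpa using this
  · have : (Gamma n).Adj (f.symm (f u)) (f.symm w) := f.symm.map_rel_iff.mpr ha
    simpa using this
  · have : (Gamma n).Adj (f.symm (f u)) (f.symm w') := f.symm.map_rel_iff.mpr ha'
    simpa using this

lemma reach_symm {a b z : ZMod n × ZMod n} (h : Reach n a b z) : Reach n b a z := by
  induction h with
  | base1 => exact .base2
  | base2 => exact .base1
  | apex _ _ hadj hap ihx ihy => exact .apex ihx ihy hadj hap

lemma reach_image (f : Gamma n ≃g Gamma n) {a b z : ZMod n × ZMod n}
    (h : Reach n (f a) (f b) z) : ∃ w, Reach n a b w ∧ f w = z := by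
  induction h with
  | base1 => exact ⟨a, .base1, rfl⟩
  | base2 => exact ⟨b, .base2, rfl⟩
  | @apex x y u _ _ hadj hap ihx ihy =>
    obtain ⟨wx, hwx, rfl⟩ := ihx
    obtain ⟨wy, hwy, rfl⟩ := ihy
    refine ⟨f.symm u, .apex hwx hwy (f.map_rel_iff.mp hadj) ?_, f.apply_symm_apply u⟩
    have := isApex_map f.symm hap
    simpa using this

end invariance

section closure

variable {n : ℕ}

lemma add_pair (x : ZMod n × ZMod n) (a b c d : ZMod n) :
    x + (a, b) + (c, d) = x + (a + c, b + d) := by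
  apply Prod.ext <;> simp [add_assoc]

/-- everything reachable from `{0, (μ,0)}` has both coordinates in `zmultiples μ`. -/
lemma reach_mem (hn : 5 ≤ n) {μ : ZMod n} {z : ZMod n × ZMod n}
    (h : Reach n (0, 0) (μ, 0) z) :
    z.1 ∈ AddSubgroup.zmultiples μ ∧ z.2 ∈ AddSubgroup.zmultiples μ := by
  induction h with
  | base1 => exact ⟨zero_mem _, zero_mem _⟩
  | base2 => exact ⟨AddSubgroup.mem_zmultiples μ, zero_mem _⟩
  | @apex x y u hx hy hadj hap ihx ihy =>
    rw [gamma_adj] at hadj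
    obtain ⟨hne, hc⟩ := hadj
    rcases hc with hA | hA | hA
    · -- row edge
      have ht : y.1 - x.1 ≠ 0 := fun hc => hne (Prod.ext (by linear_combination -hc) hA)
      set t := y.1 - x.1 with hts
      have hy' : y = x + (t, 0) := by
        apply Prod.ext
        · simp only [Prod.fst_add]; rw [hts]; ring
        · simp only [Prod.snd_add, add_zero]; exact hA.symm
      rw [hy'] at hap
      have htm : t ∈ AddSubgroup.zmultiples μ := sub_mem ihy.1 ihx.1
      rcases apex_row hn ht hap with rfl | rfl
      · exact ⟨by simpa using add_mem ihx.1 htm, by simpa using add_mem ihx.2 htm⟩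
      · exact ⟨by simpa using ihx.1, by simpa using add_mem ihx.2 (neg_mem htm)⟩
    · -- column edge
      have ht : y.2 - x.2 ≠ 0 := fun hc => hne (Prod.ext hA (by linear_combination -hc))
      set t := y.2 - x.2 with hts
      have hy' : y = x + (0, t) := by
        apply Prod.ext
        · simp only [Prod.fst_add, add_zero]; exact hA.symm
        · simp only [Prod.snd_add]; rw [hts]; ring
      rw [hy'] at hap
      have htm : t ∈ AddSubgroup.zmultiples μ := sub_mem ihy.2 ihx.2
      rcases apex_col hn ht hap with rfl | rfl
      · exact ⟨by simpa using add_mem ihx.1 htm, by simpa using add_mem ihx.2 htm⟩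
      · exact ⟨by simpa using add_mem ihx.1 (neg_mem htm), by simpa using ihx.2⟩
    · -- diagonal edge
      have ht : y.1 - x.1 ≠ 0 := fun hc => hne (Prod.ext (by linear_combination -hc)
        (by linear_combination -hc - hA))
      set t := y.1 - x.1 with hts
      have hy' : y = x + (t, t) := by
        apply Prod.ext
        · simp only [Prod.fst_add]; rw [hts]; ring
        · simp only [Prod.snd_add]; rw [hts]; linear_combination hA
      rw [hy'] at hap
      have htm : t ∈ AddSubgroup.zmultiples μ := sub_mem ihy.1 ihx.1
      rcases apex_diag hn ht hap with rfl | rfl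
      · exact ⟨by simpa using add_mem ihx.1 htm, by simpa using ihx.2⟩
      · exact ⟨by simpa using ihx.1, by simpa using add_mem ihx.2 htm⟩

/-- everything is reachable from `{0, (1,1)}`. -/
lemma reach_univ (hn : 5 ≤ n) (z : ZMod n × ZMod n) : Reach n (0, 0) (1, 1) z := by
  haveI : NeZero n := ⟨by omega⟩
  have one1 : (1 : ZMod n) ≠ 0 := by
    intro hc
    have : ((1 : ℕ) : ZMod n) = 0 := by exact_mod_cast hc
    have := Nat.le_of_dvd one_pos ((ZMod.natCast_eq_zero_iff 1 n).mp this)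
    omega
  set R := Reach n ((0 : ZMod n), (0 : ZMod n)) (1, 1) with hR
  have hAdj : ∀ x : ZMod n × ZMod n, (Gamma n).Adj x (x + (1, 1)) :=
    fun x => (Gamma n).adj_symm (adj_shift'.mpr (adj_mk (Or.inl one1) (Or.inr (Or.inr (by ring)))))
  have hAdj01 : ∀ x : ZMod n × ZMod n, (Gamma n).Adj x (x + (0, 1)) :=
    fun x => (Gamma n).adj_symm (adj_shift'.mpr (adj_mk (Or.inr one1) (Or.inr (Or.inl rfl))))
  have hAdj10 : ∀ x : ZMod n × ZMod n, (Gamma n).Adj x (x + (1, 0)) :=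
    fun x => (Gamma n).adj_symm (adj_shift'.mpr (adj_mk (Or.inl one1) (Or.inl rfl)))
  have step : ∀ x : ZMod n × ZMod n, R x → R (x + (1, 1)) →
      (R (x + (1, 0)) ∧ R (x + (2, 1))) ∧ (R (x + (0, 1)) ∧ R (x + (1, 2))) := by
    intro x rx rxy
    have r10 : R (x + (1, 0)) := .apex rx rxy (hAdj x) (isApex_diag₁ one1)
    have r01 : R (x + (0, 1)) := .apex rx rxy (hAdj x) (isApex_diag₂ one1)
    have e1 : x + (1, 1) = x + (1, 0) + (0, 1) := by rw [add_pair]; norm_num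
    have r21 : R (x + (2, 1)) := by
      have rxy' : R (x + (1, 0) + (0, 1)) := by rw [← e1]; exact rxy
      have h := Reach.apex (n := n) r10 rxy' (hAdj01 (x + (1, 0)))
        (isApex_col₁ (x := x + (1, 0)) one1)
      rw [add_pair] at h
      norm_num at h
      exact h
    have e2 : x + (1, 1) = x + (0, 1) + (1, 0) := by rw [add_pair]; norm_num
    have r12 : R (x + (1, 2)) := by
      have rxy' : R (x + (0, 1) + (1, 0)) := by rw [← e2]; exact rxy
      have h := Reach.apex (n := n) r01 rxy' (hAdj10 (x + (0, 1)))
        (isApex_row₁ (x := x + (0, 1)) one1)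
      rw [add_pair] at h
      norm_num at h
      exact h
    exact ⟨⟨r10, r21⟩, ⟨r01, r12⟩⟩
  have key : ∀ a b : ℕ, R ((a : ZMod n), (b : ZMod n)) ∧
      R ((a : ZMod n) + 1, (b : ZMod n) + 1) := by
    have step1 : ∀ a b : ℕ, (R ((a : ZMod n), (b : ZMod n)) ∧
        R ((a : ZMod n) + 1, (b : ZMod n) + 1)) →
        (R (((a + 1 : ℕ) : ZMod n), (b : ZMod n)) ∧
        R (((a + 1 : ℕ) : ZMod n) + 1, (b : ZMod n) + 1)) := by
      intro a b ⟨h1, h2⟩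
      have h2' : R (((a : ZMod n), (b : ZMod n)) + (1, 1)) := by
        rw [Prod.mk_add_mk]; exact h2
      obtain ⟨⟨r10, r21⟩, -⟩ := step _ h1 h2'
      rw [Prod.mk_add_mk] at r10 r21
      norm_num at r10 r21
      push_cast
      constructor
      · exact r10
      · convert r21 using 2 <;> ring
    have step2 : ∀ a b : ℕ, (R ((a : ZMod n), (b : ZMod n)) ∧
        R ((a : ZMod n) + 1, (b : ZMod n) + 1)) →
        (R ((a : ZMod n), ((b + 1 : ℕ) : ZMod n)) ∧
        R ((a : ZMod n) + 1, ((b + 1 : ℕ) : ZMod n) + 1)) := by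
      intro a b ⟨h1, h2⟩
      have h2' : R (((a : ZMod n), (b : ZMod n)) + (1, 1)) := by
        rw [Prod.mk_add_mk]; exact h2
      obtain ⟨-, ⟨r01, r12⟩⟩ := step _ h1 h2'
      rw [Prod.mk_add_mk] at r01 r12
      norm_num at r01 r12
      push_cast
      constructor
      · exact r01
      · convert r12 using 2 <;> ring
    have base : R (((0 : ℕ) : ZMod n), ((0 : ℕ) : ZMod n)) ∧
        R (((0 : ℕ) : ZMod n) + 1, ((0 : ℕ) : ZMod n) + 1) := by
      push_cast
      constructor
      · exact Reach.base1
      · simpa using (Reach.base2 : R (1, 1))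
    intro a
    induction a with
    | zero =>
      intro b
      induction b with
      | zero => exact base
      | succ b ihb => exact step2 0 b ihb
    | succ a iha =>
      intro b
      induction b with
      | zero => exact step1 a 0 (iha 0)
      | succ b ihb => exact step2 (a + 1) b ihb
  obtain ⟨a, ha⟩ := ZMod.natCast_zmod_surjective (n := n) z.1
  obtain ⟨b, hb⟩ := ZMod.natCast_zmod_surjective (n := n) z.2
  have := (key a b).1
  rw [ha, hb] at this
  simpa using this

end closure

section nfour

instance {n : ℕ} (x y u : ZMod n × ZMod n) : Decidable (CN n x y u) :=
  instDecidableAnd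

/-- "there are two disjoint edges among the common neighbours of `x` and `y`" -/
def P1 (x y : ZMod 4 × ZMod 4) : Prop :=
  ∃ u, CN 4 x y u ∧ ∃ v, CN 4 x y v ∧ (Gamma 4).Adj u v ∧
    ∃ u', CN 4 x y u' ∧ u' ≠ u ∧ u' ≠ v ∧
      ∃ v', CN 4 x y v' ∧ v' ≠ u ∧ v' ≠ v ∧ (Gamma 4).Adj u' v'

instance (x y : ZMod 4 × ZMod 4) : Decidable (P1 x y) := by
  unfold P1; infer_instance

lemma P1_pos : P1 (0, 0) (((2 : ℕ) : ZMod 4), 0) := by decide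

lemma P1_neg : ¬ P1 (0, 0) (1, 1) := by decide

lemma P1_swap {x y : ZMod 4 × ZMod 4} (h : P1 x y) : P1 y x := by
  obtain ⟨u, hu, v, hv, huv, u', hu', hu'1, hu'2, v', hv', hv'1, hv'2, hu'v'⟩ := h
  exact ⟨u, ⟨hu.2, hu.1⟩, v, ⟨hv.2, hv.1⟩, huv, u', ⟨hu'.2, hu'.1⟩, hu'1, hu'2,
    v', ⟨hv'.2, hv'.1⟩, hv'1, hv'2, hu'v'⟩

lemma P1_map (f : Gamma 4 ≃g Gamma 4) {x y : ZMod 4 × ZMod 4} (h : P1 x y) :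
    P1 (f x) (f y) := by
  obtain ⟨u, hu, v, hv, huv, u', hu', hu'1, hu'2, v', hv', hv'1, hv'2, hu'v'⟩ := h
  exact ⟨f u, cn_map f hu, f v, cn_map f hv, f.map_rel_iff.mpr huv,
    f u', cn_map f hu', fun hc => hu'1 (f.injective hc), fun hc => hu'2 (f.injective hc),
    f v', cn_map f hv', fun hc => hv'1 (f.injective hc), fun hc => hv'2 (f.injective hc),
    f.map_rel_iff.mpr hu'v'⟩

end nfour


/-- For composite `n` with a divisor `1 < m < n`, both
`{(0,0),(m,0)}` and `{(0,0),(1,1)}` are edges of `Γ(n)`, but no automorphism maps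
the first edge onto the second. -/
theorem Gamma_edges_not_equivalent (n m : ℕ) (hn : 4 ≤ n) (hdvd : m ∣ n)
    (hm1 : 1 < m) (hmn : m < n) :
    (Gamma n).Adj (0, 0) ((m : ZMod n), 0) ∧
    (Gamma n).Adj (0, 0) ((1 : ZMod n), 1) ∧
    ¬ ∃ f : Gamma n ≃g Gamma n,
        ({f (0, 0), f ((m : ZMod n), 0)} : Set (ZMod n × ZMod n)) =
          {(0, 0), (1, 1)} := by
  have hμ : (m : ZMod n) ≠ 0 := by
    intro hc
    have := Nat.le_of_dvd (by omega) ((ZMod.natCast_eq_zero_iff m n).mp hc)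
    omega
  have one1 : (1 : ZMod n) ≠ 0 := by
    intro hc
    have h1 : ((1 : ℕ) : ZMod n) = 0 := by exact_mod_cast hc
    have := Nat.le_of_dvd one_pos ((ZMod.natCast_eq_zero_iff 1 n).mp h1)
    omega
  refine ⟨adj_mk (Or.inl fun hc => hμ hc.symm) (Or.inl rfl),
    adj_mk (Or.inl fun hc => one1 hc.symm) (Or.inr (Or.inr rfl)), ?_⟩
  rintro ⟨f, hf⟩
  have hne : f (0, 0) ≠ f ((m : ZMod n), 0) := by
    intro hc
    exact hμ (congrArg Prod.fst (f.injective hc)).symm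
  have h0mem : f (0, 0) ∈ ({(0, 0), (1, 1)} : Set (ZMod n × ZMod n)) := by
    rw [← hf]; exact Set.mem_insert _ _
  have hmmem : f ((m : ZMod n), 0) ∈ ({(0, 0), (1, 1)} : Set (ZMod n × ZMod n)) := by
    rw [← hf]; exact Set.mem_insert_of_mem _ rfl
  simp only [Set.mem_insert_iff, Set.mem_singleton_iff] at h0mem hmmem
  have hcases : (f (0, 0) = (0, 0) ∧ f ((m : ZMod n), 0) = (1, 1)) ∨
      (f (0, 0) = (1, 1) ∧ f ((m : ZMod n), 0) = (0, 0)) := by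
    rcases h0mem with h0 | h0 <;> rcases hmmem with hm' | hm'
    · exact absurd (h0.trans hm'.symm) hne
    · exact Or.inl ⟨h0, hm'⟩
    · exact Or.inr ⟨h0, hm'⟩
    · exact absurd (h0.trans hm'.symm) hne
  by_cases h4 : n = 4
  · subst h4
    have hm2 : m = 2 := by
      have hm3 : m = 2 ∨ m = 3 := by omega
      rcases hm3 with rfl | rfl
      · rfl
      · norm_num at hdvd
    subst hm2
    rcases hcases with ⟨h1, h2⟩ | ⟨h1, h2⟩
    · have := P1_map f P1_pos
      rw [h1, h2] at this
      exact P1_neg this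
    · have := P1_map f P1_pos
      rw [h1, h2] at this
      exact P1_neg (P1_swap this)
  · have hn5 : 5 ≤ n := by omega
    haveI : NeZero n := ⟨by omega⟩
    set μ := (m : ZMod n) with hμdef
    have hcov : ∀ z : ZMod n × ZMod n, ∃ w, Reach n (0, 0) (μ, 0) w ∧ f w = z := by
      intro z
      rcases hcases with ⟨h1, h2⟩ | ⟨h1, h2⟩
      · have hz : Reach n (f (0, 0)) (f (μ, 0)) z := by
          rw [h1, h2]; exact reach_univ hn5 z
        exact reach_image f hz
      · have hz : Reach n (f (0, 0)) (f (μ, 0)) z := by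
          rw [h1, h2]; exact reach_symm (reach_univ hn5 z)
        exact reach_image f hz
    set H : Set (ZMod n × ZMod n) :=
      {p | p.1 ∈ AddSubgroup.zmultiples μ ∧ p.2 ∈ AddSubgroup.zmultiples μ} with hH
    have hsub : (Set.univ : Set (ZMod n × ZMod n)) ⊆ f '' H := by
      intro z _
      obtain ⟨w, hw, hfw⟩ := hcov z
      exact ⟨w, reach_mem hn5 hw, hfw⟩
    have h1H : ((1 : ZMod n), (0 : ZMod n)) ∉ H := by
      rintro ⟨h1, -⟩
      obtain ⟨k, hk⟩ := AddSubgroup.mem_zmultiples_iff.mp h1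
      rw [zsmul_eq_mul] at hk
      have hunit : IsUnit μ := IsUnit.of_mul_eq_one (a := μ) (k : ZMod n) (by rw [mul_comm]; exact hk)
      have hcop : Nat.Coprime m n := (ZMod.isUnit_iff_coprime m n).mp (hμdef ▸ hunit)
      have hg1 : Nat.gcd m n = 1 := hcop
      have hg2 : Nat.gcd m n = m := Nat.gcd_eq_left hdvd
      omega
    have hHss : H ⊂ Set.univ := Set.ssubset_univ_iff.mpr (by
      intro hc
      exact h1H (hc ▸ Set.mem_univ _))
    have c1 : H.ncard < (Set.univ : Set (ZMod n × ZMod n)).ncard :=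
      Set.ncard_lt_ncard hHss Set.finite_univ
    have c2 : (Set.univ : Set (ZMod n × ZMod n)).ncard ≤ (f '' H).ncard :=
      Set.ncard_le_ncard hsub (Set.toFinite _)
    have c3 : (f '' H).ncard = H.ncard := Set.ncard_image_of_injective H f.injective
    omega
end

section
/- The graph Γ(5) is not 2-arc-transitive: there exist 2-arcs (u₀, u₁, u₂) and (v₀, v₁, v₂) of Γ(5) such that no automorphism f of Γ(5) satisfies f(u₀) = v₀, f(u₁) = v₁ and f(u₂) = v₂. In particular, ((0,0), (0,1), (2,3)) and ((0,0), (2,2), (4,2)) are both 2-arcs of Γ(5), and no automorphism of Γ(5) maps the first to the second. -/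
instance gamma5AdjDec : DecidableRel (Gamma 5).Adj := fun x y =>
  decidable_of_iff (x ≠ y ∧ ((x - y) ≠ 0 ∧ ((x - y).2 = 0 ∨ (x - y).1 = 0 ∨ (x - y).1 = (x - y).2)))
    Iff.rfl

lemma gamma5_no_iso : ¬ ∃ f : Gamma 5 ≃g Gamma 5,
    f (0, 0) = (0, 0) ∧ f (0, 1) = (2, 2) ∧ f (2, 3) = (4, 2) := by
  rintro ⟨f, h0, h1, h2⟩
  have s0 : f.symm (0, 0) = (0, 0) := by
    have := congrArg f.symm h0; rw [RelIso.symm_apply_apply] at this; exact this.symm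
  have s1 : f.symm (2, 2) = (0, 1) := by
    have := congrArg f.symm h1; rw [RelIso.symm_apply_apply] at this; exact this.symm
  have s2 : f.symm (4, 2) = (2, 3) := by
    have := congrArg f.symm h2; rw [RelIso.symm_apply_apply] at this; exact this.symm
  classical
  set A : Finset (ZMod 5 × ZMod 5) := Finset.univ.filter
    (fun x => (Gamma 5).Adj (0, 0) x ∧ (Gamma 5).Adj (0, 1) x ∧ (Gamma 5).Adj (2, 3) x) with hA
  set B : Finset (ZMod 5 × ZMod 5) := Finset.univ.filter
    (fun x => (Gamma 5).Adj (0, 0) x ∧ (Gamma 5).Adj (2, 2) x ∧ (Gamma 5).Adj (4, 2) x) with hB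
  have hle : B.card ≤ A.card := by
    apply Finset.card_le_card_of_injOn (fun y => f.symm y)
    · intro y hy
      simp only [hB, Finset.mem_coe, Finset.mem_filter, Finset.mem_univ, true_and] at hy
      simp only [hA, Finset.mem_coe, Finset.mem_filter, Finset.mem_univ, true_and]
      refine ⟨?_, ?_, ?_⟩
      · rw [← s0]; exact f.symm.map_rel_iff.mpr hy.1
      · rw [← s1]; exact f.symm.map_rel_iff.mpr hy.2.1
      · rw [← s2]; exact f.symm.map_rel_iff.mpr hy.2.2
    · exact fun a _ b _ h => f.symm.injective h
  have hcA : A.card = 2 := by decide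
  have hcB : B.card = 3 := by decide
  omega

/-- `Γ(5)` is not 2-arc-transitive: there exist 2-arcs no automorphism
maps one to the other; in particular `((0,0),(0,1),(2,3))` and `((0,0),(2,2),(4,2))` are
2-arcs of `Γ(5)` not related by any automorphism. -/
theorem Gamma5_not_two_arc_transitive :
    (∃ u₀ u₁ u₂ v₀ v₁ v₂ : ZMod 5 × ZMod 5,
      (Gamma 5).Adj u₀ u₁ ∧ (Gamma 5).Adj u₁ u₂ ∧ u₀ ≠ u₂ ∧
      (Gamma 5).Adj v₀ v₁ ∧ (Gamma 5).Adj v₁ v₂ ∧ v₀ ≠ v₂ ∧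
      ¬ ∃ f : Gamma 5 ≃g Gamma 5, f u₀ = v₀ ∧ f u₁ = v₁ ∧ f u₂ = v₂) ∧
    (Gamma 5).Adj (0, 0) (0, 1) ∧ (Gamma 5).Adj (0, 1) (2, 3) ∧
      ((0, 0) : ZMod 5 × ZMod 5) ≠ (2, 3) ∧
    (Gamma 5).Adj (0, 0) (2, 2) ∧ (Gamma 5).Adj (2, 2) (4, 2) ∧
      ((0, 0) : ZMod 5 × ZMod 5) ≠ (4, 2) ∧
    ¬ ∃ f : Gamma 5 ≃g Gamma 5,
        f (0, 0) = (0, 0) ∧ f (0, 1) = (2, 2) ∧ f (2, 3) = (4, 2) := by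
  refine ⟨⟨(0,0), (0,1), (2,3), (0,0), (2,2), (4,2), by decide, by decide, by decide,
    by decide, by decide, by decide, gamma5_no_iso⟩,
    by decide, by decide, by decide, by decide, by decide, by decide, gamma5_no_iso⟩
end
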